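/- Assume the KKT system has a solution (x̄,ȳ,z̄), let {(x^k,y^k,z^k)}_{k≥0} be an infinite sequence generated by the sPADMM, and assume Condition (C) holds. Then the sequence {x^k} converges to some x^∞ ∈ X that is an optimal solution of the dual problem (i.e. h(x^∞) ≥ h(x) for all x ∈ X), and f(y^k) + g(z^k) → f(ȳ) + g(z̄), the optimal value of the primal problem (P), as k → ∞. -/

import Mathlib

open scoped RealInnerProductSpace
open Filter Bornology

noncomputable section

variable {X Y Z : Type*}
variable [NormedAddCommGroup X] [InnerProductSpace ℝ X] [FiniteDimensional ℝ X]
variable [NormedAddCommGroup Y] [InnerProductSpace ℝ Y] [FiniteDimensional ℝ Y]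
variable [NormedAddCommGroup Z] [InnerProductSpace ℝ Z] [FiniteDimensional ℝ Z]

/-- `f : E → ℝ ∪ {+∞}` is proper, convex and lower semicontinuous. -/
def ProperConvexLsc {E : Type*} [NormedAddCommGroup E] [InnerProductSpace ℝ E]
    (f : E → EReal) : Prop :=
  (∃ u, f u ≠ ⊤) ∧ (∀ u, f u ≠ ⊥) ∧
    (∀ u v : E, ∀ a b : ℝ, 0 ≤ a → 0 ≤ b → a + b = 1 →
      f (a • u + b • v) ≤ (a : EReal) * f u + (b : EReal) * f v) ∧
    LowerSemicontinuous f

/-- `frec` is the recession function of `f`:  for any `u₀` in the effective domain of `f`,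
`frec u = lim_{ρ → +∞} (f (u₀ + ρ u) - f u₀) / ρ`. -/
def IsRecessionFn {E : Type*} [NormedAddCommGroup E] [InnerProductSpace ℝ E]
    (f : E → EReal) (frec : E → EReal) : Prop :=
  ∀ u₀ : E, f u₀ ≠ ⊤ → ∀ u : E,
    Tendsto (fun ρ : ℝ => (f (u₀ + ρ • u) - f u₀) * ((ρ⁻¹ : ℝ) : EReal))
      atTop (nhds (frec u))

/-- The augmented Lagrangian `L_σ(y, z; x)` of the problem
`min f(y) + g(z)  s.t.  A* y + B* z = c`. -/
def augL (f : Y → EReal) (g : Z → EReal) (A : X →ₗ[ℝ] Y) (B : X →ₗ[ℝ] Z)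
    (c : X) (σ : ℝ) (y : Y) (z : Z) (x : X) : EReal :=
  f y + g z + ((⟪x, (LinearMap.adjoint A) y + (LinearMap.adjoint B) z - c⟫ : ℝ) : EReal)
    + ((σ / 2 * ‖(LinearMap.adjoint A) y + (LinearMap.adjoint B) z - c‖ ^ 2 : ℝ) : EReal)

/-- Objective of the `y`-subproblem:  `F(w) = L_σ(w, z'; x') + (1/2) ‖w - y'‖_S²`. -/
def ysub (f : Y → EReal) (g : Z → EReal) (A : X →ₗ[ℝ] Y) (B : X →ₗ[ℝ] Z)
    (c : X) (σ : ℝ) (S : Y →ₗ[ℝ] Y) (x' : X) (y' : Y) (z' : Z) (w : Y) : EReal :=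
  augL f g A B c σ w z' x' + ((⟪w - y', S (w - y')⟫ / 2 : ℝ) : EReal)

/-- Objective of the `z`-subproblem:  `G(w) = L_σ(y', w; x') + (1/2) ‖w - z'‖_T²`. -/
def zsub (f : Y → EReal) (g : Z → EReal) (A : X →ₗ[ℝ] Y) (B : X →ₗ[ℝ] Z)
    (c : X) (σ : ℝ) (T : Z →ₗ[ℝ] Z) (x' : X) (y' : Y) (z' : Z) (w : Z) : EReal :=
  augL f g A B c σ y' w x' + ((⟪w - z', T (w - z')⟫ / 2 : ℝ) : EReal)

/-- The subdifferential `∂f(u)` of a function `f : E → ℝ ∪ {+∞}`. -/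
def subdiff {E : Type*} [NormedAddCommGroup E] [InnerProductSpace ℝ E]
    (f : E → EReal) (u : E) : Set E :=
  {v | ∀ w : E, f u + ((⟪v, w - u⟫ : ℝ) : EReal) ≤ f w}

/-- `(x, y, z) : ℕ → X × Y × Z` is a sequence generated by the sPADMM scheme with
penalty parameter `σ`, step-length `τ` and proximal terms given by `S` and `T`,
started from an initial point `(x⁰, y⁰, z⁰) ∈ X × dom f × dom g`. -/
def IsSPADMM (f : Y → EReal) (g : Z → EReal) (A : X →ₗ[ℝ] Y) (B : X →ₗ[ℝ] Z)
    (c : X) (σ τ : ℝ) (S : Y →ₗ[ℝ] Y) (T : Z →ₗ[ℝ] Z)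
    (x : ℕ → X) (y : ℕ → Y) (z : ℕ → Z) : Prop :=
  f (y 0) ≠ ⊤ ∧ g (z 0) ≠ ⊤ ∧
    (∀ k : ℕ, ∀ w : Y,
      ysub f g A B c σ S (x k) (y k) (z k) (y (k + 1))
        ≤ ysub f g A B c σ S (x k) (y k) (z k) w) ∧
    (∀ k : ℕ, ∀ w : Z,
      zsub f g A B c σ T (x k) (y (k + 1)) (z k) (z (k + 1))
        ≤ zsub f g A B c σ T (x k) (y (k + 1)) (z k) w) ∧
    (∀ k : ℕ, x (k + 1) = x k + (τ * σ) •
      ((LinearMap.adjoint A) (y (k + 1)) + (LinearMap.adjoint B) (z (k + 1)) - c))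

/-- `(x̄, ȳ, z̄)` solves the KKT system:
`-A x̄ ∈ ∂f(ȳ)`, `-B x̄ ∈ ∂g(z̄)` and `A* ȳ + B* z̄ = c`. -/
def IsKKT (f : Y → EReal) (g : Z → EReal) (A : X →ₗ[ℝ] Y) (B : X →ₗ[ℝ] Z)
    (c : X) (xb : X) (yb : Y) (zb : Z) : Prop :=
  -(A xb) ∈ subdiff f yb ∧ -(B xb) ∈ subdiff g zb ∧
    (LinearMap.adjoint A) yb + (LinearMap.adjoint B) zb = c

/-- Condition (C): either `0 < τ < (1+√5)/2`, or `τ ≥ (1+√5)/2` and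
`Σ_k ‖x^{k+1} - x^k‖² < ∞`. -/
def CondC {X : Type*} [NormedAddCommGroup X] (τ : ℝ) (x : ℕ → X) : Prop :=
  (0 < τ ∧ τ < (1 + Real.sqrt 5) / 2) ∨
    ((1 + Real.sqrt 5) / 2 ≤ τ ∧ Summable fun k : ℕ => ‖x (k + 1) - x k‖ ^ 2)

/-- `Sf` satisfies `⟨v - v', u - u'⟩ ≥ ‖u - u'‖²_{Sf}` for all `v ∈ ∂f(u)`, `v' ∈ ∂f(u')`. -/
def SubMono {E : Type*} [NormedAddCommGroup E] [InnerProductSpace ℝ E]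
    (f : E → EReal) (Sf : E →ₗ[ℝ] E) : Prop :=
  ∀ u u' v v' : E, v ∈ subdiff f u → v' ∈ subdiff f u' →
    ⟪u - u', Sf (u - u')⟫ ≤ ⟪v - v', u - u'⟫

/-- The dual objective function `h(x) = inf_{y, z} L(y, z; x)`, where
`L(y, z; x) = f(y) + g(z) + ⟨x, A*y + B*z - c⟩` is the ordinary Lagrangian. -/
def dualFn (f : Y → EReal) (g : Z → EReal) (A : X →ₗ[ℝ] Y) (B : X →ₗ[ℝ] Z) (c : X)
    (x : X) : EReal :=
  ⨅ y : Y, ⨅ z : Z,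
    (f y + g z + ((⟪x, (LinearMap.adjoint A) y + (LinearMap.adjoint B) z - c⟫ : ℝ) : EReal))

section Aux

variable {E : Type*} [NormedAddCommGroup E] [InnerProductSpace ℝ E]

lemma subdiff_ne_top {f : E → EReal} (hproper : ∃ w, f w ≠ ⊤) {u v : E}
    (h : v ∈ subdiff f u) : f u ≠ ⊤ := by
  obtain ⟨w, hw⟩ := hproper
  intro hu
  have := h w
  rw [hu] at this
  have h2 : (⊤ : EReal) + ((⟪v, w - u⟫ : ℝ) : EReal) = ⊤ := by
    exact EReal.top_add_of_ne_bot (EReal.coe_ne_bot _)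
  rw [h2] at this
  exact hw (top_le_iff.mp this)

/-- real form of the subgradient inequality -/
lemma subdiff_real {f : E → EReal} {u v w : E} (h : v ∈ subdiff f u)
    (hu : f u ≠ ⊤) (hub : f u ≠ ⊥) (hw : f w ≠ ⊤) (hwb : f w ≠ ⊥) :
    (f u).toReal + ⟪v, w - u⟫ ≤ (f w).toReal := by
  have := h w
  rw [← EReal.coe_toReal hu hub, ← EReal.coe_toReal hw hwb, ← EReal.coe_add] at this
  exact_mod_cast this

lemma subdiff_mono {f : E → EReal} (hproper : ∃ w, f w ≠ ⊤) (hbot : ∀ u, f u ≠ ⊥)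
    {u u' v v' : E} (h : v ∈ subdiff f u) (h' : v' ∈ subdiff f u') :
    0 ≤ ⟪v - v', u - u'⟫ := by
  have hu := subdiff_ne_top hproper h
  have hu' := subdiff_ne_top hproper h'
  have h1 := subdiff_real h hu (hbot u) hu' (hbot u')
  have h2 := subdiff_real h' hu' (hbot u') hu (hbot u)
  have e : ⟪v - v', u - u'⟫ = -(⟪v, u' - u⟫ + ⟪v', u - u'⟫) := by
    simp [inner_sub_left, inner_sub_right]; ring
  rw [e]; linarith

/-- Minimizer of `f + q` with `q` quadratic gives a subgradient of `f`. -/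
lemma key_subgrad {f : E → EReal}
    (hconv : ∀ u v : E, ∀ a b : ℝ, 0 ≤ a → 0 ≤ b → a + b = 1 →
      f (a • u + b • v) ≤ (a : EReal) * f u + (b : EReal) * f v)
    (hbot : ∀ u, f u ≠ ⊥) {u : E} (hu : f u ≠ ⊤)
    (q : E → ℝ) (gv : E) (Q : E → ℝ) (hQ : ∀ d, 0 ≤ Q d)
    (hq : ∀ w : E, ∀ t : ℝ, q (u + t • (w - u)) = q u + t * ⟪gv, w - u⟫ + t ^ 2 * Q (w - u))
    (hmin : ∀ w, f u + (q u : EReal) ≤ f w + (q w : EReal)) :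
    -gv ∈ subdiff f u := by
  intro w
  rcases eq_or_ne (f w) ⊤ with hw | hw
  · rw [hw]; exact le_top
  -- real values
  set φ := (f u).toReal with hφ
  set ψ := (f w).toReal with hψ
  have hfu : f u = (φ : EReal) := (EReal.coe_toReal hu (hbot u)).symm
  have hfw : f w = (ψ : EReal) := (EReal.coe_toReal hw (hbot w)).symm
  have key : φ ≤ ψ + ⟪gv, w - u⟫ := by
    apply le_of_forall_pos_le_add
    intro ε hε
    set t : ℝ := min 1 (ε / (Q (w - u) + 1)) with ht
    have hQ1 : 0 < Q (w - u) + 1 := by have := hQ (w - u); linarith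
    have ht0 : 0 < t := lt_min one_pos (div_pos hε hQ1)
    have ht1 : t ≤ 1 := min_le_left _ _
    have htQ : t * Q (w - u) ≤ ε := by
      have h1 : t ≤ ε / (Q (w - u) + 1) := min_le_right _ _
      have : t * Q (w - u) ≤ (ε / (Q (w - u) + 1)) * (Q (w - u) + 1) := by
        apply mul_le_mul h1 (by linarith [hQ (w - u)]) (hQ (w - u)) (le_of_lt (div_pos hε hQ1))
      rwa [div_mul_cancel₀ _ (ne_of_gt hQ1)] at this
    -- convexity at w_t
    have hcomb : (1 - t) • u + t • w = u + t • (w - u) := by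
      rw [sub_smul, one_smul, smul_sub]; abel
    have hcv := hconv u w (1 - t) t (by linarith) (le_of_lt ht0) (by ring)
    rw [hcomb, hfu, hfw] at hcv
    have hcv' : f (u + t • (w - u)) ≤ (((1 - t) * φ + t * ψ : ℝ) : EReal) := by
      calc f (u + t • (w - u)) ≤ ((1 - t : ℝ) : EReal) * (φ : EReal) + (t : EReal) * (ψ : EReal) := hcv
      _ = (((1 - t) * φ + t * ψ : ℝ) : EReal) := by
          rw [← EReal.coe_mul, ← EReal.coe_mul, ← EReal.coe_add]
    have hm := hmin (u + t • (w - u))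
    rw [hfu] at hm
    have hm2 : ((φ + q u : ℝ) : EReal) ≤ (((1 - t) * φ + t * ψ + q (u + t • (w - u)) : ℝ) : EReal) := by
      calc ((φ + q u : ℝ) : EReal) = (φ : EReal) + (q u : EReal) := EReal.coe_add _ _
      _ ≤ f (u + t • (w - u)) + ((q (u + t • (w - u)) : ℝ) : EReal) := hm
      _ ≤ (((1 - t) * φ + t * ψ : ℝ) : EReal) + ((q (u + t • (w - u)) : ℝ) : EReal) := by
          exact add_le_add hcv' (le_refl _)
      _ = (((1 - t) * φ + t * ψ + q (u + t • (w - u)) : ℝ) : EReal) := (EReal.coe_add _ _).symm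
    have hm3 : φ + q u ≤ (1 - t) * φ + t * ψ + q (u + t • (w - u)) := EReal.coe_le_coe_iff.mp hm2
    rw [hq w t] at hm3
    -- t*φ ≤ t*ψ + t*⟪gv,w-u⟫ + t²Q
    have hm4 : t * φ ≤ t * (ψ + ⟪gv, w - u⟫ + t * Q (w - u)) := by nlinarith
    have hm5 : φ ≤ ψ + ⟪gv, w - u⟫ + t * Q (w - u) := le_of_mul_le_mul_left (by linarith) ht0
    linarith
  rw [hfu, hfw, ← EReal.coe_add, EReal.coe_le_coe_iff]
  have : ⟪-gv, w - u⟫ = -⟪gv, w - u⟫ := inner_neg_left _ _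
  rw [this]; linarith


lemma subgrad_step {E F : Type*}
    [NormedAddCommGroup E] [InnerProductSpace ℝ E] [FiniteDimensional ℝ E]
    [NormedAddCommGroup F] [InnerProductSpace ℝ F] [FiniteDimensional ℝ F]
    {f : F → EReal}
    (hconv : ∀ u v : F, ∀ a b : ℝ, 0 ≤ a → 0 ≤ b → a + b = 1 →
      f (a • u + b • v) ≤ (a : EReal) * f u + (b : EReal) * f v)
    (hbot : ∀ u, f u ≠ ⊥)
    (M : E →ₗ[ℝ] F) (S : F →ₗ[ℝ] F) (hSsym : S.IsSymmetric) (hSpsd : ∀ w, 0 ≤ ⟪w, S w⟫)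
    (σ : ℝ) (hσ : 0 ≤ σ) (xk m : E) (w₀ : F) (γ : ℝ) {u : F} (hu : f u ≠ ⊤)
    (hmin : ∀ w : F, f u + ((γ + ⟪xk, (LinearMap.adjoint M) u + m⟫
        + σ / 2 * ‖(LinearMap.adjoint M) u + m‖ ^ 2 + ⟪u - w₀, S (u - w₀)⟫ / 2 : ℝ) : EReal)
      ≤ f w + ((γ + ⟪xk, (LinearMap.adjoint M) w + m⟫
        + σ / 2 * ‖(LinearMap.adjoint M) w + m‖ ^ 2 + ⟪w - w₀, S (w - w₀)⟫ / 2 : ℝ) : EReal)) :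
    -(M xk + σ • M ((LinearMap.adjoint M) u + m) + S (u - w₀)) ∈ subdiff f u := by
  set a := LinearMap.adjoint M with ha
  apply key_subgrad hconv hbot hu
    (fun w => γ + ⟪xk, a w + m⟫ + σ / 2 * ‖a w + m‖ ^ 2 + ⟪w - w₀, S (w - w₀)⟫ / 2)
    _ (fun d => σ / 2 * ‖a d‖ ^ 2 + ⟪d, S d⟫ / 2)
  · intro d
    have h1 : 0 ≤ ‖a d‖ ^ 2 := sq_nonneg _
    have h2 := hSpsd d
    positivity
  · intro w t
    set d := w - u with hd
    have e1 : a (u + t • d) + m = (a u + m) + t • (a d) := by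
      simp only [map_add, map_smul]; abel
    have e2 : (u + t • d) - w₀ = (u - w₀) + t • d := by abel
    have e3 : ‖(a u + m) + t • (a d)‖ ^ 2
        = ‖a u + m‖ ^ 2 + 2 * (t * ⟪a u + m, a d⟫) + t ^ 2 * ‖a d‖ ^ 2 := by
      rw [norm_add_sq_real, real_inner_smul_right, norm_smul]
      rw [mul_pow, Real.norm_eq_abs, sq_abs]
    have e4 : ⟪(u - w₀) + t • d, S ((u - w₀) + t • d)⟫
        = ⟪u - w₀, S (u - w₀)⟫ + 2 * (t * ⟪S (u - w₀), d⟫) + t ^ 2 * ⟪d, S d⟫ := by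
      rw [map_add, map_smul, inner_add_left, inner_add_right, inner_add_right,
        real_inner_smul_left, real_inner_smul_right, real_inner_smul_left, real_inner_smul_right]
      have h5 : ⟪u - w₀, S d⟫ = ⟪S (u - w₀), d⟫ := (hSsym (u - w₀) d).symm
      have h6 : ⟪d, S (u - w₀)⟫ = ⟪S (u - w₀), d⟫ := real_inner_comm _ _
      rw [h5, h6]; ring
    have e5 : ⟪M xk + σ • M (a u + m) + S (u - w₀), d⟫
        = ⟪xk, a d⟫ + σ * ⟪a u + m, a d⟫ + ⟪S (u - w₀), d⟫ := by
      rw [inner_add_left, inner_add_left, real_inner_smul_left]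
      rw [ha, LinearMap.adjoint_inner_right, LinearMap.adjoint_inner_right]
    have e6 : ⟪xk, (a u + m) + t • (a d)⟫ = ⟪xk, a u + m⟫ + t * ⟪xk, a d⟫ := by
      rw [inner_add_right, real_inner_smul_right]
    simp only [e1, e2, e3, e4, e6, e5]
    ring
  · exact hmin


end Aux

section Part3

lemma collectE (a : EReal) (r1 r2 r3 r4 : ℝ) :
    a + (r1 : EReal) + (r2 : EReal) + (r3 : EReal) + (r4 : EReal)
      = a + ((r1 + r2 + r3 + r4 : ℝ) : EReal) := by
  push_cast
  abel

lemma ysub_eq (f : Y → EReal) (g : Z → EReal) (A : X →ₗ[ℝ] Y) (B : X →ₗ[ℝ] Z)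
    (c : X) (σ : ℝ) (S : Y →ₗ[ℝ] Y) (x' : X) (y' : Y) (z' : Z) (γ : ℝ)
    (hz : g z' = (γ : EReal)) (w : Y) :
    ysub f g A B c σ S x' y' z' w
      = f w + ((γ + ⟪x', (LinearMap.adjoint A) w + ((LinearMap.adjoint B) z' - c)⟫
        + σ / 2 * ‖(LinearMap.adjoint A) w + ((LinearMap.adjoint B) z' - c)‖ ^ 2
        + ⟪w - y', S (w - y')⟫ / 2 : ℝ) : EReal) := by
  unfold ysub augL
  rw [hz]
  simp only [add_sub_assoc]
  rw [← collectE]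

lemma zsub_eq (f : Y → EReal) (g : Z → EReal) (A : X →ₗ[ℝ] Y) (B : X →ₗ[ℝ] Z)
    (c : X) (σ : ℝ) (T : Z →ₗ[ℝ] Z) (x' : X) (y' : Y) (z' : Z) (φ : ℝ)
    (hy : f y' = (φ : EReal)) (w : Z) :
    zsub f g A B c σ T x' y' z' w
      = g w + ((φ + ⟪x', (LinearMap.adjoint B) w + ((LinearMap.adjoint A) y' - c)⟫
        + σ / 2 * ‖(LinearMap.adjoint B) w + ((LinearMap.adjoint A) y' - c)‖ ^ 2
        + ⟪w - z', T (w - z')⟫ / 2 : ℝ) : EReal) := by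
  unfold zsub augL
  rw [hy]
  have hv : ∀ w : Z, (LinearMap.adjoint A) y' + (LinearMap.adjoint B) w - c
      = (LinearMap.adjoint B) w + ((LinearMap.adjoint A) y' - c) := fun w => by abel
  simp only [hv]
  rw [← collectE]
  have : ∀ u : EReal, (φ : EReal) + u = u + (φ : EReal) := fun u => add_comm _ _
  rw [this (g w)]

lemma spadmm_fin (f : Y → EReal) (g : Z → EReal)
    (hf : ProperConvexLsc f) (hg : ProperConvexLsc g)
    (A : X →ₗ[ℝ] Y) (B : X →ₗ[ℝ] Z) (c : X) (σ τ : ℝ)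
    (S : Y →ₗ[ℝ] Y) (T : Z →ₗ[ℝ] Z)
    (x : ℕ → X) (y : ℕ → Y) (z : ℕ → Z)
    (hseq : IsSPADMM f g A B c σ τ S T x y z) :
    ∀ k : ℕ, f (y k) ≠ ⊤ ∧ g (z k) ≠ ⊤ := by
  intro k
  induction k with
  | zero => exact ⟨hseq.1, hseq.2.1⟩
  | succ k ih =>
    obtain ⟨hfk, hgk⟩ := ih
    have hfk1 : f (y (k + 1)) ≠ ⊤ := by
      intro h
      have hmin := hseq.2.2.1 k (y k)
      rw [ysub_eq f g A B c σ S (x k) (y k) (z k) (g (z k)).toReal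
          (EReal.coe_toReal hgk (hg.2.1 _)).symm,
        ysub_eq f g A B c σ S (x k) (y k) (z k) (g (z k)).toReal
          (EReal.coe_toReal hgk (hg.2.1 _)).symm] at hmin
      rw [h, EReal.top_add_of_ne_bot (EReal.coe_ne_bot _),
        ← EReal.coe_toReal hfk (hf.2.1 _), ← EReal.coe_add] at hmin
      exact EReal.coe_ne_top _ (top_le_iff.mp hmin)
    refine ⟨hfk1, ?_⟩
    intro h
    have hmin := hseq.2.2.2.1 k (z k)
    rw [zsub_eq f g A B c σ T (x k) (y (k + 1)) (z k) (f (y (k + 1))).toReal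
        (EReal.coe_toReal hfk1 (hf.2.1 _)).symm,
      zsub_eq f g A B c σ T (x k) (y (k + 1)) (z k) (f (y (k + 1))).toReal
        (EReal.coe_toReal hfk1 (hf.2.1 _)).symm] at hmin
    rw [h, EReal.top_add_of_ne_bot (EReal.coe_ne_bot _),
      ← EReal.coe_toReal hgk (hg.2.1 _), ← EReal.coe_add] at hmin
    exact EReal.coe_ne_top _ (top_le_iff.mp hmin)

lemma spadmm_grad (f : Y → EReal) (g : Z → EReal)
    (hf : ProperConvexLsc f) (hg : ProperConvexLsc g)
    (A : X →ₗ[ℝ] Y) (B : X →ₗ[ℝ] Z) (c : X) (σ τ : ℝ) (hσ : 0 < σ)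
    (S : Y →ₗ[ℝ] Y) (hSsym : S.IsSymmetric) (hSpsd : ∀ w : Y, 0 ≤ ⟪w, S w⟫)
    (T : Z →ₗ[ℝ] Z) (hTsym : T.IsSymmetric) (hTpsd : ∀ w : Z, 0 ≤ ⟪w, T w⟫)
    (x : ℕ → X) (y : ℕ → Y) (z : ℕ → Z)
    (hseq : IsSPADMM f g A B c σ τ S T x y z) :
    ∀ k : ℕ,
      -(A (x k) + σ • A ((LinearMap.adjoint A) (y (k + 1)) + ((LinearMap.adjoint B) (z k) - c))
          + S (y (k + 1) - y k)) ∈ subdiff f (y (k + 1)) ∧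
      -(B (x k) + σ • B ((LinearMap.adjoint B) (z (k + 1)) + ((LinearMap.adjoint A) (y (k + 1)) - c))
          + T (z (k + 1) - z k)) ∈ subdiff g (z (k + 1)) := by
  intro k
  have hfin := spadmm_fin f g hf hg A B c σ τ S T x y z hseq
  have hfk1 : f (y (k + 1)) ≠ ⊤ := (hfin (k + 1)).1
  have hgk1 : g (z (k + 1)) ≠ ⊤ := (hfin (k + 1)).2
  have hgk : g (z k) ≠ ⊤ := (hfin k).2
  constructor
  · apply subgrad_step hf.2.2.1 hf.2.1 A S hSsym hSpsd σ (le_of_lt hσ)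
      (x k) ((LinearMap.adjoint B) (z k) - c) (y k) (g (z k)).toReal hfk1
    intro w
    have h1 := ysub_eq f g A B c σ S (x k) (y k) (z k) (g (z k)).toReal
        (EReal.coe_toReal hgk (hg.2.1 _)).symm (y (k + 1))
    have h2 := ysub_eq f g A B c σ S (x k) (y k) (z k) (g (z k)).toReal
        (EReal.coe_toReal hgk (hg.2.1 _)).symm w
    have := hseq.2.2.1 k w
    rw [h1, h2] at this
    exact this
  · apply subgrad_step hg.2.2.1 hg.2.1 B T hTsym hTpsd σ (le_of_lt hσ)
      (x k) ((LinearMap.adjoint A) (y (k + 1)) - c) (z k) (f (y (k + 1))).toReal hgk1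
    intro w
    have h1 := zsub_eq f g A B c σ T (x k) (y (k + 1)) (z k) (f (y (k + 1))).toReal
        (EReal.coe_toReal hfk1 (hf.2.1 _)).symm (z (k + 1))
    have h2 := zsub_eq f g A B c σ T (x k) (y (k + 1)) (z k) (f (y (k + 1))).toReal
        (EReal.coe_toReal hfk1 (hf.2.1 _)).symm w
    have := hseq.2.2.2.1 k w
    rw [h1, h2] at this
    exact this

end Part3

section Aux2

lemma fejer_step (σ τ : ℝ) (hσ : 0 ≤ σ) (hτ : 0 ≤ τ)
    (S : Y →ₗ[ℝ] Y) (hSsym : S.IsSymmetric) (T : Z →ₗ[ℝ] Z) (hTsym : T.IsSymmetric)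
    (xe : X) (ye ye' : Y) (ze ze' : Z) (p q q' : X)
    (h1 : ⟪xe, p⟫ + σ * ⟪p + q', p⟫ + ⟪S (ye - ye'), ye⟫ ≤ 0)
    (h2 : ⟪xe, q⟫ + σ * ⟪p + q, q⟫ + ⟪T (ze - ze'), ze⟫ ≤ 0) :
    ‖xe + (τ * σ) • (p + q)‖ ^ 2
      + (τ * σ) * (⟪ye, S ye⟫ + ⟪ze, T ze⟫ + σ * ‖q‖ ^ 2)
      + (τ * σ) * ((2 - τ) * σ * ‖p + q‖ ^ 2 - 2 * σ * ⟪p + q, q - q'⟫ + σ * ‖q - q'‖ ^ 2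
          + ⟪ye - ye', S (ye - ye')⟫ + ⟪ze - ze', T (ze - ze')⟫)
    ≤ ‖xe‖ ^ 2 + (τ * σ) * (⟪ye', S ye'⟫ + ⟪ze', T ze'⟫ + σ * ‖q'‖ ^ 2) := by
  have key : ‖xe + (τ * σ) • (p + q)‖ ^ 2
      + (τ * σ) * (⟪ye, S ye⟫ + ⟪ze, T ze⟫ + σ * ‖q‖ ^ 2)
      + (τ * σ) * ((2 - τ) * σ * ‖p + q‖ ^ 2 - 2 * σ * ⟪p + q, q - q'⟫ + σ * ‖q - q'‖ ^ 2
          + ⟪ye - ye', S (ye - ye')⟫ + ⟪ze - ze', T (ze - ze')⟫)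
      - (‖xe‖ ^ 2 + (τ * σ) * (⟪ye', S ye'⟫ + ⟪ze', T ze'⟫ + σ * ‖q'‖ ^ 2))
      = (2 * τ * σ) * ((⟪xe, p⟫ + σ * ⟪p + q', p⟫ + ⟪S (ye - ye'), ye⟫)
        + (⟪xe, q⟫ + σ * ⟪p + q, q⟫ + ⟪T (ze - ze'), ze⟫)) := by
    have s3 : ⟪ye, S ye'⟫ = ⟪ye', S ye⟫ := by rw [real_inner_comm, hSsym]
    have t3 : ⟪ze, T ze'⟫ = ⟪ze', T ze⟫ := by rw [real_inner_comm, hTsym]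
    simp only [← real_inner_self_eq_norm_sq, map_sub, map_add, inner_sub_left, inner_sub_right,
      inner_add_left, inner_add_right, real_inner_smul_left, real_inner_smul_right,
      hSsym _ _, hTsym _ _]
    rw [s3, t3]
    rw [real_inner_comm p xe, real_inner_comm q xe, real_inner_comm q p, real_inner_comm q' p,
      real_inner_comm q' q]
    ring
  have hs : (2 * τ * σ) * ((⟪xe, p⟫ + σ * ⟪p + q', p⟫ + ⟪S (ye - ye'), ye⟫)
        + (⟪xe, q⟫ + σ * ⟪p + q, q⟫ + ⟪T (ze - ze'), ze⟫)) ≤ 0 :=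
    mul_nonpos_of_nonneg_of_nonpos (by positivity) (add_nonpos h1 h2)
  linarith [key, hs]

lemma psd_cs {E : Type*} [NormedAddCommGroup E] [InnerProductSpace ℝ E]
    (S : E →ₗ[ℝ] E) (hSsym : S.IsSymmetric) (hSpsd : ∀ w, 0 ≤ ⟪w, S w⟫) (u v : E) :
    ⟪u, S v⟫ ^ 2 ≤ ⟪u, S u⟫ * ⟪v, S v⟫ := by
  have hquad : ∀ x : ℝ, 0 ≤ ⟪v, S v⟫ * (x * x) + (2 * ⟪u, S v⟫) * x + ⟪u, S u⟫ := by
    intro x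
    have h := hSpsd (u + x • v)
    have e : ⟪u + x • v, S (u + x • v)⟫
        = ⟪v, S v⟫ * (x * x) + (2 * ⟪u, S v⟫) * x + ⟪u, S u⟫ := by
      rw [map_add, map_smul, inner_add_left, inner_add_right, inner_add_right,
        real_inner_smul_left, real_inner_smul_right, real_inner_smul_left,
        real_inner_smul_right]
      have : ⟪v, S u⟫ = ⟪u, S v⟫ := by rw [real_inner_comm, hSsym]
      rw [this]; ring
    rwa [e] at h
  have := discrim_le_zero hquad
  unfold discrim at this
  nlinarith [this]

lemma quasi_fejer (Φ w ε : ℕ → ℝ) (k₀ : ℕ)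
    (hΦ : ∀ k, 0 ≤ Φ k) (hw : ∀ k, 0 ≤ w k) (hε : ∀ k, 0 ≤ ε k) (hεs : Summable ε)
    (hrec : ∀ k, k₀ ≤ k → Φ (k + 1) + w k ≤ Φ k + ε k) :
    Summable w ∧ ∃ L, Tendsto Φ atTop (nhds L) := by
  have hεs' : Summable (fun i : ℕ => ε (i + k₀)) := (summable_nat_add_iff k₀).mpr hεs
  have hP : ∀ n : ℕ, (∑ i ∈ Finset.range n, w (i + k₀)) + Φ (n + k₀)
      ≤ Φ k₀ + ∑ i ∈ Finset.range n, ε (i + k₀) := by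
    intro n
    induction n with
    | zero => simp
    | succ n ih =>
      rw [Finset.sum_range_succ, Finset.sum_range_succ]
      have h := hrec (n + k₀) (Nat.le_add_left _ _)
      have hidx : n + k₀ + 1 = (n + 1) + k₀ := by ring
      rw [hidx] at h
      linarith
  have hsumw : Summable w := by
    apply (summable_nat_add_iff k₀).mp
    apply summable_of_sum_range_le (fun n => hw _)
    intro n
    have h1 := hP n
    have h2 : ∑ i ∈ Finset.range n, ε (i + k₀) ≤ ∑' i, ε (i + k₀) :=
      Summable.sum_le_tsum _ (fun i _ => hε _) hεs'
    have h3 := hΦ (n + k₀)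
    calc ∑ i ∈ Finset.range n, w (i + k₀) ≤ Φ k₀ + ∑ i ∈ Finset.range n, ε (i + k₀) := by linarith
    _ ≤ Φ k₀ + ∑' i, ε (i + k₀) := by linarith
  refine ⟨hsumw, ?_⟩
  set Φ' : ℕ → ℝ := fun n => Φ (n + k₀) with hΦ'
  set ε' : ℕ → ℝ := fun n => ε (n + k₀) with hε'
  set tl : ℕ → ℝ := fun i => ∑' j, ε' (j + i) with htl
  have htl0 : Tendsto tl atTop (nhds 0) := tendsto_sum_nat_add ε'
  have hG : ∀ k, Φ' (k + 1) + tl (k + 1) ≤ Φ' k + tl k := by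
    intro k
    have hsum : Summable (fun j : ℕ => ε' (j + k)) := (summable_nat_add_iff k).mpr hεs'
    have htlk : tl k = ε' k + tl (k + 1) := by
      rw [htl]
      simp only
      rw [Summable.tsum_eq_zero_add hsum]
      congr 1
      · simp
      · apply tsum_congr; intro j; congr 1; ring
    have h1 := hrec (k + k₀) (Nat.le_add_left _ _)
    have hidx : k + k₀ + 1 = (k + 1) + k₀ := by ring
    rw [hidx] at h1
    have hw' := hw (k + k₀)
    have e1 : Φ' (k + 1) = Φ ((k + 1) + k₀) := rfl
    have e2 : Φ' k = Φ (k + k₀) := rfl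
    have e3 : ε' k = ε (k + k₀) := rfl
    rw [e1, e2]
    rw [e3] at htlk
    linarith
  have hanti : Antitone (fun k => Φ' k + tl k) := antitone_nat_of_succ_le hG
  have hbdd : BddBelow (Set.range fun k => Φ' k + tl k) := by
    refine ⟨0, ?_⟩
    rintro _ ⟨k, rfl⟩
    exact add_nonneg (hΦ _) (tsum_nonneg (fun j => hε _))
  have hGconv : Tendsto (fun k => Φ' k + tl k) atTop (nhds (⨅ k, (Φ' k + tl k))) :=
    tendsto_atTop_ciInf hanti hbdd
  have hΦconv : Tendsto Φ' atTop (nhds (⨅ k, (Φ' k + tl k))) := by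
    have := hGconv.sub htl0
    simpa using this
  exact ⟨_, (tendsto_add_atTop_iff_nat k₀).mp hΦconv⟩

lemma two_mul_le' (s aa bb : ℝ) (haa : 0 ≤ aa) (hbb : 0 ≤ bb)
    (hs : s ^ 2 ≤ aa * bb) : 2 * s ≤ aa + bb := by
  nlinarith [sq_nonneg (aa - bb), sq_nonneg (aa + bb - 2 * s), sq_nonneg (aa + bb)]

lemma psd_2ab {E : Type*} [NormedAddCommGroup E] [InnerProductSpace ℝ E]
    (T : E →ₗ[ℝ] E) (hTsym : T.IsSymmetric) (hTpsd : ∀ w, 0 ≤ ⟪w, T w⟫) (u v : E) :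
    2 * ⟪T u, v⟫ ≤ ⟪u, T u⟫ + ⟪v, T v⟫ := by
  have h := hTpsd (u - v)
  have e : ⟪u - v, T (u - v)⟫ = ⟪u, T u⟫ - 2 * ⟪T u, v⟫ + ⟪v, T v⟫ := by
    have h1 : ⟪v, T u⟫ = ⟪T u, v⟫ := real_inner_comm _ _
    have h2 : ⟪u, T v⟫ = ⟪T u, v⟫ := (hTsym u v).symm
    simp only [map_sub, inner_sub_left, inner_sub_right, h1, h2]
    ring
  linarith [e ▸ h]

lemma sqnorm_summable_tendsto {E : Type*} [NormedAddCommGroup E]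
    {v : ℕ → E} (h : Filter.Tendsto (fun k => ‖v k‖ ^ 2) Filter.atTop (nhds 0)) :
    Filter.Tendsto v Filter.atTop (nhds 0) := by
  rw [tendsto_zero_iff_norm_tendsto_zero]
  have := (Real.continuous_sqrt.tendsto 0).comp h
  simp only [Function.comp_def, Real.sqrt_zero] at this
  convert this using 2 with k
  rw [Real.sqrt_sq (norm_nonneg _)]

lemma comb1 (τ σ α ab P2 P1 R2 R1 t s cr B1 Dy1 D0 D1 : ℝ)
    (hMIk : P2 + τ * σ * ((2 - τ) * σ * R2 - 2 * σ * t + σ * B1 + Dy1 + D1) ≤ P1)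
    (hE2 : (2 * τ * σ) * (σ * t) ≤ (2 * τ * σ) * ((1 - τ) * σ * s - D1 + cr))
    (hb1' : (τ * σ * σ) * (2 * ((1 - τ) * s)) ≤ (τ * σ * σ) * (ab * α * R1 + ab / α * B1))
    (hb2' : (τ * σ) * (2 * cr) ≤ (τ * σ) * (D0 + D1)) :
    (P2 + (τ * σ) * (ab * α * σ * R2 + D1))
      + (τ * σ) * (((2 - τ) - ab * α) * σ * R2 + (1 - ab / α) * σ * B1 + Dy1 + D1)
    ≤ P1 + (τ * σ) * (ab * α * σ * R1 + D0) := by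
  linarith

lemma comb2 (τ σ P2 P1 RRv tcv Bzv Dyv Dzv : ℝ)
    (hMIk : P2 + τ * σ * ((2 - τ) * σ * RRv - 2 * σ * tcv + σ * Bzv + Dyv + Dzv) ≤ P1)
    (hb' : τ * σ * σ * (2 * tcv) ≤ τ * σ * σ * (2 * RRv + Bzv / 2)) :
    P2 + τ * σ * (σ / 2 * Bzv + Dyv + Dzv) ≤ P1 + (τ * σ) ^ 2 * RRv := by
  linarith

lemma psd_sub {E : Type*} [NormedAddCommGroup E] [InnerProductSpace ℝ E]
    (S : E →ₗ[ℝ] E) (hSsym : S.IsSymmetric) (hSpsd : ∀ w, 0 ≤ ⟪w, S w⟫) (u v : E) :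
    ⟪u - v, S (u - v)⟫ ≤ 2 * ⟪u, S u⟫ + 2 * ⟪v, S v⟫ := by
  have h1 := psd_2ab S hSsym hSpsd u (-v)
  simp only [inner_neg_right, inner_neg_left, map_neg, neg_neg, mul_neg] at h1
  have e : ⟪u - v, S (u - v)⟫ = ⟪u, S u⟫ - 2 * ⟪S u, v⟫ + ⟪v, S v⟫ := by
    have ha : ⟪v, S u⟫ = ⟪S u, v⟫ := real_inner_comm _ _
    have hb : ⟪u, S v⟫ = ⟪S u, v⟫ := (hSsym u v).symm
    simp only [map_sub, inner_sub_left, inner_sub_right, ha, hb]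
    ring
  linarith

lemma sq0 (s bdd : ℕ → ℝ) (Mb : ℝ) (hb : ∀ k, |s k| ≤ Mb * bdd k)
    (hbd : Filter.Tendsto bdd Filter.atTop (nhds 0)) :
    Filter.Tendsto s Filter.atTop (nhds 0) := by
  apply squeeze_zero_norm (fun k => hb k)
  simpa using hbd.const_mul Mb

lemma sq0' (s d : ℕ → ℝ) (Mb : ℝ) (hMb : 0 ≤ Mb) (hsq : ∀ k, s k ^ 2 ≤ d k * Mb)
    (hds : Filter.Tendsto d Filter.atTop (nhds 0)) :
    Filter.Tendsto s Filter.atTop (nhds 0) := by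
  have hb : ∀ k, ‖s k‖ ≤ Real.sqrt (d k * Mb) := by
    intro k
    rw [Real.norm_eq_abs, ← Real.sqrt_sq_eq_abs]
    exact Real.sqrt_le_sqrt (hsq k)
  have hg : Filter.Tendsto (fun k => Real.sqrt (d k * Mb)) Filter.atTop (nhds 0) := by
    have h1 : Filter.Tendsto (fun k => d k * Mb) Filter.atTop (nhds 0) := by
      simpa using hds.mul_const Mb
    have := (Real.continuous_sqrt.tendsto (0:ℝ)).comp h1
    simpa [Real.sqrt_zero, Function.comp_def] using this
  exact squeeze_zero_norm hb hg

end Aux2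

set_option maxHeartbeats 4000000 in
/-- **Theorem 1(a).**  If the KKT system has a solution `(x̄, ȳ, z̄)` and Condition (C)
holds, then `{x^k}` converges to an optimal solution of the dual problem, and the primal
objective values `f(y^k) + g(z^k)` converge to the optimal value `f(ȳ) + g(z̄)`. -/
theorem stmt_16
    (f : Y → EReal) (g : Z → EReal)
    (hf : ProperConvexLsc f) (hg : ProperConvexLsc g)
    (A : X →ₗ[ℝ] Y) (B : X →ₗ[ℝ] Z) (c : X)
    (σ τ : ℝ) (hσ : 0 < σ) (hτ : 0 < τ)
    (S : Y →ₗ[ℝ] Y) (hSsym : S.IsSymmetric) (hSpsd : ∀ w : Y, 0 ≤ ⟪w, S w⟫)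
    (T : Z →ₗ[ℝ] Z) (hTsym : T.IsSymmetric) (hTpsd : ∀ w : Z, 0 ≤ ⟪w, T w⟫)
    (xb : X) (yb : Y) (zb : Z) (hkkt : IsKKT f g A B c xb yb zb)
    (x : ℕ → X) (y : ℕ → Y) (z : ℕ → Z)
    (hseq : IsSPADMM f g A B c σ τ S T x y z)
    (hC : CondC τ x) :
    (∃ xinf : X, Tendsto x atTop (nhds xinf) ∧
      ∀ w : X, dualFn f g A B c w ≤ dualFn f g A B c xinf) ∧
    Tendsto (fun k : ℕ => f (y k) + g (z k)) atTop (nhds (f yb + g zb)) := by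
  obtain ⟨hAxb, hBxb, hcons⟩ := hkkt
  have hfin := spadmm_fin f g hf hg A B c σ τ S T x y z hseq
  have hgrad := spadmm_grad f g hf hg A B c σ τ hσ S hSsym hSpsd T hTsym hTpsd x y z hseq
  set a : Y →ₗ[ℝ] X := LinearMap.adjoint A with ha
  set b : Z →ₗ[ℝ] X := LinearMap.adjoint B with hb
  have hAtrans : ∀ (w : X) (d : Y), ⟪A w, d⟫ = ⟪w, a d⟫ := fun w d =>
    (LinearMap.adjoint_inner_right A w d).symm
  have hBtrans : ∀ (w : X) (d : Z), ⟪B w, d⟫ = ⟪w, b d⟫ := fun w d =>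
    (LinearMap.adjoint_inner_right B w d).symm
  set r : ℕ → X := fun k => a (y k) + b (z k) - c with hrdef
  have hxup : ∀ k, x (k + 1) = x k + (τ * σ) • (r (k + 1)) := by
    intro k
    simp only [hrdef]
    exact hseq.2.2.2.2 k
  have hrerr : ∀ k, r k = a (y k - yb) + b (z k - zb) := by
    intro k
    simp only [hrdef, map_sub, ← hcons]
    abel
  -- the two basic scalar inequalities, for an arbitrary dual KKT multiplier xh
  have hkey1 : ∀ (xh : X), -(A xh) ∈ subdiff f yb → ∀ k,
      ⟪x k - xh, a (y (k + 1) - yb)⟫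
        + σ * ⟪a (y (k + 1) - yb) + b (z k - zb), a (y (k + 1) - yb)⟫
        + ⟪S ((y (k + 1) - yb) - (y k - yb)), y (k + 1) - yb⟫ ≤ 0 := by
    intro xh hxh k
    have hm := subdiff_mono hf.1 hf.2.1 (hgrad k).1 hxh
    have hvec : a (y (k + 1)) + (b (z k) - c) = a (y (k + 1) - yb) + b (z k - zb) := by
      rw [map_sub, map_sub, ← hcons]; abel
    have hdy : (y (k + 1) - yb) - (y k - yb) = y (k + 1) - y k := by abel
    have heq : ⟪-(A (x k) + σ • A (a (y (k + 1)) + (b (z k) - c)) + S (y (k + 1) - y k))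
          - -(A xh), y (k + 1) - yb⟫
        = -(⟪x k - xh, a (y (k + 1) - yb)⟫
          + σ * ⟪a (y (k + 1) - yb) + b (z k - zb), a (y (k + 1) - yb)⟫
          + ⟪S ((y (k + 1) - yb) - (y k - yb)), y (k + 1) - yb⟫) := by
      rw [hvec, hdy]
      simp only [inner_sub_left, inner_neg_left, inner_add_left, real_inner_smul_left]
      rw [hAtrans (x k), hAtrans xh, hAtrans (a (y (k + 1) - yb) + b (z k - zb))]
      simp only [inner_add_left]
      ring
    rw [heq] at hm
    linarith
  have hkey2 : ∀ (xh : X), -(B xh) ∈ subdiff g zb → ∀ k,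
      ⟪x k - xh, b (z (k + 1) - zb)⟫
        + σ * ⟪a (y (k + 1) - yb) + b (z (k + 1) - zb), b (z (k + 1) - zb)⟫
        + ⟪T ((z (k + 1) - zb) - (z k - zb)), z (k + 1) - zb⟫ ≤ 0 := by
    intro xh hxh k
    have hm := subdiff_mono hg.1 hg.2.1 (hgrad k).2 hxh
    have hvec : b (z (k + 1)) + (a (y (k + 1)) - c) = a (y (k + 1) - yb) + b (z (k + 1) - zb) := by
      rw [map_sub, map_sub, ← hcons]; abel
    have hdz : (z (k + 1) - zb) - (z k - zb) = z (k + 1) - z k := by abel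
    have heq : ⟪-(B (x k) + σ • B (b (z (k + 1)) + (a (y (k + 1)) - c)) + T (z (k + 1) - z k))
          - -(B xh), z (k + 1) - zb⟫
        = -(⟪x k - xh, b (z (k + 1) - zb)⟫
          + σ * ⟪a (y (k + 1) - yb) + b (z (k + 1) - zb), b (z (k + 1) - zb)⟫
          + ⟪T ((z (k + 1) - zb) - (z k - zb)), z (k + 1) - zb⟫) := by
      rw [hvec, hdz]
      simp only [inner_sub_left, inner_neg_left, inner_add_left, real_inner_smul_left]
      rw [hBtrans (x k), hBtrans xh, hBtrans (a (y (k + 1) - yb) + b (z (k + 1) - zb))]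
      simp only [inner_add_left]
      ring
    rw [heq] at hm
    linarith
  -- master one-step inequality
  have MI : ∀ (xh : X), -(A xh) ∈ subdiff f yb → -(B xh) ∈ subdiff g zb → ∀ k,
      ‖x (k + 1) - xh‖ ^ 2 + (τ * σ) * (⟪y (k + 1) - yb, S (y (k + 1) - yb)⟫
          + ⟪z (k + 1) - zb, T (z (k + 1) - zb)⟫ + σ * ‖b (z (k + 1) - zb)‖ ^ 2)
        + (τ * σ) * ((2 - τ) * σ * ‖r (k + 1)‖ ^ 2
          - 2 * σ * ⟪r (k + 1), b (z (k + 1) - z k)⟫ + σ * ‖b (z (k + 1) - z k)‖ ^ 2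
          + ⟪y (k + 1) - y k, S (y (k + 1) - y k)⟫ + ⟪z (k + 1) - z k, T (z (k + 1) - z k)⟫)
      ≤ ‖x k - xh‖ ^ 2 + (τ * σ) * (⟪y k - yb, S (y k - yb)⟫
          + ⟪z k - zb, T (z k - zb)⟫ + σ * ‖b (z k - zb)‖ ^ 2) := by
    intro xh hxhA hxhB k
    have h1 := hkey1 xh hxhA k
    have h2 := hkey2 xh hxhB k
    have H := fejer_step σ τ (le_of_lt hσ) (le_of_lt hτ) S hSsym T hTsym
      (x k - xh) (y (k + 1) - yb) (y k - yb) (z (k + 1) - zb) (z k - zb)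
      (a (y (k + 1) - yb)) (b (z (k + 1) - zb)) (b (z k - zb)) h1 h2
    have hx1 : x k - xh + (τ * σ) • (a (y (k + 1) - yb) + b (z (k + 1) - zb))
        = x (k + 1) - xh := by
      rw [hxup k, hrerr (k + 1)]; abel
    have hq : b (z (k + 1) - zb) - b (z k - zb) = b (z (k + 1) - z k) := by
      rw [← map_sub]; congr 1; abel
    have hyd : (y (k + 1) - yb) - (y k - yb) = y (k + 1) - y k := by abel
    have hzd : (z (k + 1) - zb) - (z k - zb) = z (k + 1) - z k := by abel
    rw [hx1, hq, hyd, hzd, ← hrerr (k + 1)] at H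
    exact H
  -- abbreviations
  set RR : ℕ → ℝ := fun k => ‖r (k + 1)‖ ^ 2 with hRRdef
  set Dy : ℕ → ℝ := fun k => ⟪y (k + 1) - y k, S (y (k + 1) - y k)⟫ with hDydef
  set Dz : ℕ → ℝ := fun k => ⟪z (k + 1) - z k, T (z (k + 1) - z k)⟫ with hDzdef
  set Bz : ℕ → ℝ := fun k => ‖b (z (k + 1) - z k)‖ ^ 2 with hBzdef
  set tc : ℕ → ℝ := fun k => ⟪r (k + 1), b (z (k + 1) - z k)⟫ with htcdef
  set Phi : X → ℕ → ℝ := fun xh k => ‖x k - xh‖ ^ 2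
    + (τ * σ) * (⟪y k - yb, S (y k - yb)⟫ + ⟪z k - zb, T (z k - zb)⟫
      + σ * ‖b (z k - zb)‖ ^ 2) with hPhidef
  have hRRpos : ∀ k, 0 ≤ RR k := fun k => sq_nonneg _
  have hDypos : ∀ k, 0 ≤ Dy k := fun k => hSpsd _
  have hDzpos : ∀ k, 0 ≤ Dz k := fun k => hTpsd _
  have hBzpos : ∀ k, 0 ≤ Bz k := fun k => sq_nonneg _
  have hτσ : 0 < τ * σ := mul_pos hτ hσ
  have hPhipos : ∀ xh k, 0 ≤ Phi xh k := by
    intro xh k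
    simp only [hPhidef]
    have h1 := hSpsd (y k - yb)
    have h2 := hTpsd (z k - zb)
    have h3 : (0:ℝ) ≤ σ * ‖b (z k - zb)‖ ^ 2 := mul_nonneg (le_of_lt hσ) (sq_nonneg _)
    have h4 : (0:ℝ) ≤ ‖x k - xh‖ ^ 2 := sq_nonneg _
    nlinarith [hτσ]
  have hMI' : ∀ (xh : X), -(A xh) ∈ subdiff f yb → -(B xh) ∈ subdiff g zb → ∀ k,
      Phi xh (k + 1) + (τ * σ) * ((2 - τ) * σ * RR k - 2 * σ * tc k + σ * Bz k + Dy k + Dz k)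
        ≤ Phi xh k := by
    intro xh h1 h2 k
    have := MI xh h1 h2 k
    simp only [hPhidef, hRRdef, htcdef, hBzdef, hDydef, hDzdef]
    exact this
  -- the extra inequality (E)
  have hE : ∀ k : ℕ, σ * tc (k + 1) ≤ (1 - τ) * σ * ⟪r (k + 1), b (z (k + 2) - z (k + 1))⟫
      - Dz (k + 1) + ⟪T (z (k + 1) - z k), z (k + 2) - z (k + 1)⟫ := by
    intro k
    have hm := subdiff_mono hg.1 hg.2.1 (hgrad (k + 1)).2 (hgrad k).2
    have hv : ∀ j : ℕ, b (z (j + 1)) + (a (y (j + 1)) - c) = r (j + 1) := by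
      intro j; simp only [hrdef]; abel
    rw [hv (k + 1), hv k] at hm
    have hxd : x (k + 1) = x k + (τ * σ) • r (k + 1) := hxup k
    have heq : ⟪-(B (x (k + 1)) + σ • B (r (k + 2)) + T (z (k + 2) - z (k + 1)))
          - -(B (x k) + σ • B (r (k + 1)) + T (z (k + 1) - z k)), z (k + 2) - z (k + 1)⟫
        = -((τ * σ) * ⟪r (k + 1), b (z (k + 2) - z (k + 1))⟫
          + σ * ⟪r (k + 2), b (z (k + 2) - z (k + 1))⟫
          - σ * ⟪r (k + 1), b (z (k + 2) - z (k + 1))⟫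
          + ⟪T (z (k + 2) - z (k + 1)), z (k + 2) - z (k + 1)⟫
          - ⟪T (z (k + 1) - z k), z (k + 2) - z (k + 1)⟫) := by
      rw [hxd]
      simp only [inner_sub_left, inner_neg_left, inner_add_left, real_inner_smul_left, map_add,
        map_smul]
      rw [hBtrans (x k), hBtrans (r (k + 1)), hBtrans (r (k + 2))]
      ring
    rw [heq] at hm
    have htc1 : tc (k + 1) = ⟪r (k + 2), b (z (k + 2) - z (k + 1))⟫ := by
      simp only [htcdef]
    have hDz1 : Dz (k + 1) = ⟪z (k + 2) - z (k + 1), T (z (k + 2) - z (k + 1))⟫ := by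
      simp only [hDzdef]
    have hsymT : ⟪T (z (k + 2) - z (k + 1)), z (k + 2) - z (k + 1)⟫
        = ⟪z (k + 2) - z (k + 1), T (z (k + 2) - z (k + 1))⟫ := real_inner_comm _ _
    rw [htc1, hDz1]
    rw [hsymT] at hm
    linarith
  -- the master convergence/summability result
  have master : ∀ (xh : X), -(A xh) ∈ subdiff f yb → -(B xh) ∈ subdiff g zb →
      (Summable RR ∧ Summable Dy ∧ Summable Dz ∧ Summable Bz ∧
        ∃ L, Tendsto (Phi xh) atTop (nhds L)) := by
    intro xh hxA hxB
    have extract : ∀ (W U : ℕ → ℝ) (cp : ℝ), 0 < cp → Summable W → (∀ k, 0 ≤ U k) →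
        (∀ k, cp * U k ≤ W k) → Summable U := by
      intro W U cp hcp hW hU hle
      apply Summable.of_nonneg_of_le hU (fun k => ?_) (hW.mul_left cp⁻¹)
      have h2 : U k = cp⁻¹ * (cp * U k) := by field_simp
      rw [h2]
      exact mul_le_mul_of_nonneg_left (hle k) (inv_nonneg.mpr hcp.le)
    rcases hC with ⟨hτ0, hτg⟩ | ⟨hτg, hsum⟩
    · -- case 0 < τ < (1+√5)/2
      have h5 : Real.sqrt 5 ^ 2 = 5 := Real.sq_sqrt (by norm_num)
      have h5a : 1 ≤ Real.sqrt 5 := by nlinarith [Real.sqrt_nonneg 5]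
      have hτ2 : τ ^ 2 - τ - 1 < 0 := by
        have hA : 0 < Real.sqrt 5 - (2 * τ - 1) := by
          have : 2 * τ < 1 + Real.sqrt 5 := by linarith [hτg]
          linarith
        have hB : 0 < Real.sqrt 5 + (2 * τ - 1) := by linarith
        nlinarith [mul_pos hA hB]
      obtain ⟨α, hα, hc1pos, hc2pos⟩ : ∃ α : ℝ, 0 < α ∧ 0 < (2 - τ) - |1 - τ| * α
          ∧ 0 < 1 - |1 - τ| / α := by
        rcases eq_or_ne τ 1 with h1 | h1
        · refine ⟨1, one_pos, ?_, ?_⟩ <;> rw [h1] <;> norm_num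
        · have hβpos : 0 < |1 - τ| := abs_pos.mpr (by intro h; apply h1; linarith)
          have hβ2 : |1 - τ| ^ 2 < 2 - τ := by
            have e : |1 - τ| ^ 2 = (1 - τ) ^ 2 := sq_abs _
            nlinarith [hτ2]
          have h2τ : (0:ℝ) < 2 - τ := by nlinarith [hτ2]
          have hαpos : 0 < (|1 - τ| + (2 - τ) / |1 - τ|) / 2 := by
            have := div_pos h2τ hβpos
            linarith
          refine ⟨(|1 - τ| + (2 - τ) / |1 - τ|) / 2, hαpos, ?_, ?_⟩
          · have e : |1 - τ| * ((|1 - τ| + (2 - τ) / |1 - τ|) / 2)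
                = (|1 - τ| ^ 2 + (2 - τ)) / 2 := by field_simp
            rw [e]
            linarith
          · have hlt : |1 - τ| < (|1 - τ| + (2 - τ) / |1 - τ|) / 2 := by
              rw [lt_div_iff₀ (by norm_num : (0:ℝ) < 2)]
              have : |1 - τ| < (2 - τ) / |1 - τ| := by
                rw [lt_div_iff₀ hβpos]
                nlinarith
              linarith
            have := (div_lt_one hαpos).mpr hlt
            linarith
      set Θ : ℕ → ℝ := fun j => Phi xh j + (τ * σ) * (|1 - τ| * α * σ * ‖r j‖ ^ 2
        + ⟪z j - z (j - 1), T (z j - z (j - 1))⟫) with hΘdef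
      set W : ℕ → ℝ := fun k => (τ * σ) * (((2 - τ) - |1 - τ| * α) * σ * RR k
        + (1 - |1 - τ| / α) * σ * Bz k + Dy k + Dz k) with hWdef
      have hΘpos : ∀ k, 0 ≤ Θ k := by
        intro k
        have h2 : 0 ≤ |1 - τ| * α * σ * ‖r k‖ ^ 2 := by positivity
        have h3 := hTpsd (z k - z (k - 1))
        simp only [hΘdef]
        exact add_nonneg (hPhipos xh k) (mul_nonneg hτσ.le (add_nonneg h2 h3))
      have hWpos : ∀ k, 0 ≤ W k := by
        intro k
        have h1 : 0 ≤ ((2 - τ) - |1 - τ| * α) * σ * RR k :=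
          mul_nonneg (mul_nonneg hc1pos.le hσ.le) (hRRpos k)
        have h2 : 0 ≤ (1 - |1 - τ| / α) * σ * Bz k :=
          mul_nonneg (mul_nonneg hc2pos.le hσ.le) (hBzpos k)
        have h3 := hDypos k
        have h4 := hDzpos k
        simp only [hWdef]
        have : 0 ≤ ((2 - τ) - |1 - τ| * α) * σ * RR k + (1 - |1 - τ| / α) * σ * Bz k
            + Dy k + Dz k := by linarith
        exact mul_nonneg hτσ.le this
      have hrec : ∀ k, 1 ≤ k → Θ (k + 1) + W k ≤ Θ k + 0 := by
        intro k hk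
        obtain ⟨i, rfl⟩ : ∃ i, k = i + 1 := ⟨k - 1, by omega⟩
        have hMIk := hMI' xh hxA hxB (i + 1)
        have hEi := hE i
        have hcs : ⟪r (i + 1), b (z (i + 2) - z (i + 1))⟫ ^ 2 ≤ RR i * Bz (i + 1) := by
          have h1 := abs_real_inner_le_norm (r (i + 1)) (b (z (i + 2) - z (i + 1)))
          have h2 : ⟪r (i + 1), b (z (i + 2) - z (i + 1))⟫ ^ 2
              ≤ (‖r (i + 1)‖ * ‖b (z (i + 2) - z (i + 1))‖) ^ 2 := by
            rw [← sq_abs]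
            exact pow_le_pow_left₀ (abs_nonneg _) h1 2
          calc ⟪r (i + 1), b (z (i + 2) - z (i + 1))⟫ ^ 2
              ≤ (‖r (i + 1)‖ * ‖b (z (i + 2) - z (i + 1))‖) ^ 2 := h2
          _ = RR i * Bz (i + 1) := by simp only [hRRdef, hBzdef]; ring
        have hb1 : 2 * ((1 - τ) * ⟪r (i + 1), b (z (i + 2) - z (i + 1))⟫)
            ≤ |1 - τ| * α * RR i + |1 - τ| / α * Bz (i + 1) := by
          apply two_mul_le'
          · exact mul_nonneg (mul_nonneg (abs_nonneg _) hα.le) (hRRpos i)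
          · exact mul_nonneg (div_nonneg (abs_nonneg _) hα.le) (hBzpos (i + 1))
          have haux : (|1 - τ| * α * RR i) * (|1 - τ| / α * Bz (i + 1))
              = (1 - τ) ^ 2 * (RR i * Bz (i + 1)) := by
            have habs : |1 - τ| * |1 - τ| = (1 - τ) * (1 - τ) := abs_mul_abs_self _
            have hαi : α * α⁻¹ = 1 := mul_inv_cancel₀ hα.ne'
            rw [div_eq_mul_inv]
            linear_combination (|1 - τ| * |1 - τ| * RR i * Bz (i + 1)) * hαi + (RR i * Bz (i + 1)) * habs
          calc ((1 - τ) * ⟪r (i + 1), b (z (i + 2) - z (i + 1))⟫) ^ 2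
              = (1 - τ) ^ 2 * ⟪r (i + 1), b (z (i + 2) - z (i + 1))⟫ ^ 2 := by ring
          _ ≤ (1 - τ) ^ 2 * (RR i * Bz (i + 1)) :=
              mul_le_mul_of_nonneg_left hcs (sq_nonneg _)
          _ = _ := haux.symm
        have hb2 : 2 * ⟪T (z (i + 1) - z i), z (i + 2) - z (i + 1)⟫ ≤ Dz i + Dz (i + 1) := by
          have h := psd_2ab T hTsym hTpsd (z (i + 1) - z i) (z (i + 2) - z (i + 1))
          simp only [hDzdef]
          linarith [h]
        have hE2 := mul_le_mul_of_nonneg_left hEi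
          (by positivity : (0:ℝ) ≤ 2 * τ * σ)
        have hb1' := mul_le_mul_of_nonneg_left hb1
          (by positivity : (0:ℝ) ≤ τ * σ * σ)
        have hb2' := mul_le_mul_of_nonneg_left hb2 hτσ.le
        simp only [hΘdef, hWdef, add_zero, Nat.add_sub_cancel]
        have e1 : ‖r (i + 1)‖ ^ 2 = RR i := by simp only [hRRdef]
        have e2 : ‖r (i + 1 + 1)‖ ^ 2 = RR (i + 1) := by simp only [hRRdef]
        have e3 : ⟪z (i + 1 + 1) - z (i + 1), T (z (i + 1 + 1) - z (i + 1))⟫ = Dz (i + 1) := by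
          simp only [hDzdef]
        have e4 : ⟪z (i + 1) - z i, T (z (i + 1) - z i)⟫ = Dz i := by
          simp only [hDzdef]
        rw [e1, e2, e3, e4]
        exact comb1 τ σ α (|1 - τ|) (Phi xh (i + 1 + 1)) (Phi xh (i + 1)) (RR (i + 1)) (RR i)
          (tc (i + 1)) (⟪r (i + 1), b (z (i + 2) - z (i + 1))⟫)
          (⟪T (z (i + 1) - z i), z (i + 2) - z (i + 1)⟫) (Bz (i + 1)) (Dy (i + 1)) (Dz i)
          (Dz (i + 1)) hMIk hE2 hb1' hb2'
      obtain ⟨hWsum, L, hΘL⟩ := quasi_fejer Θ W (fun _ => (0:ℝ)) 1 hΘpos hWpos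
        (fun _ => le_refl 0) summable_zero (by intro k hk; simpa using hrec k hk)
      have hSRR : Summable RR := by
        apply extract W RR ((τ * σ) * (((2 - τ) - |1 - τ| * α) * σ)) (by positivity) hWsum hRRpos
        intro k
        simp only [hWdef]
        have h2 : 0 ≤ (1 - |1 - τ| / α) * σ * Bz k :=
          mul_nonneg (mul_nonneg hc2pos.le hσ.le) (hBzpos k)
        have h3 := hDypos k
        have h4 := hDzpos k
        have := mul_le_mul_of_nonneg_left
          (by linarith : ((2 - τ) - |1 - τ| * α) * σ * RR k
            ≤ ((2 - τ) - |1 - τ| * α) * σ * RR k + (1 - |1 - τ| / α) * σ * Bz k + Dy k + Dz k)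
          hτσ.le
        calc (τ * σ) * (((2 - τ) - |1 - τ| * α) * σ) * RR k
            = (τ * σ) * (((2 - τ) - |1 - τ| * α) * σ * RR k) := by ring
        _ ≤ _ := this
      have hSBz : Summable Bz := by
        apply extract W Bz ((τ * σ) * ((1 - |1 - τ| / α) * σ)) (by positivity) hWsum hBzpos
        intro k
        simp only [hWdef]
        have h1 : 0 ≤ ((2 - τ) - |1 - τ| * α) * σ * RR k :=
          mul_nonneg (mul_nonneg hc1pos.le hσ.le) (hRRpos k)
        have h3 := hDypos k
        have h4 := hDzpos k
        have := mul_le_mul_of_nonneg_left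
          (by linarith : (1 - |1 - τ| / α) * σ * Bz k
            ≤ ((2 - τ) - |1 - τ| * α) * σ * RR k + (1 - |1 - τ| / α) * σ * Bz k + Dy k + Dz k)
          hτσ.le
        calc (τ * σ) * ((1 - |1 - τ| / α) * σ) * Bz k
            = (τ * σ) * ((1 - |1 - τ| / α) * σ * Bz k) := by ring
        _ ≤ _ := this
      have hSDy : Summable Dy := by
        apply extract W Dy (τ * σ) hτσ hWsum hDypos
        intro k
        simp only [hWdef]
        have h1 : 0 ≤ ((2 - τ) - |1 - τ| * α) * σ * RR k :=
          mul_nonneg (mul_nonneg hc1pos.le hσ.le) (hRRpos k)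
        have h2 : 0 ≤ (1 - |1 - τ| / α) * σ * Bz k :=
          mul_nonneg (mul_nonneg hc2pos.le hσ.le) (hBzpos k)
        have h4 := hDzpos k
        have := mul_le_mul_of_nonneg_left
          (by linarith : Dy k
            ≤ ((2 - τ) - |1 - τ| * α) * σ * RR k + (1 - |1 - τ| / α) * σ * Bz k + Dy k + Dz k)
          hτσ.le
        exact this
      have hSDz : Summable Dz := by
        apply extract W Dz (τ * σ) hτσ hWsum hDzpos
        intro k
        simp only [hWdef]
        have h1 : 0 ≤ ((2 - τ) - |1 - τ| * α) * σ * RR k :=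
          mul_nonneg (mul_nonneg hc1pos.le hσ.le) (hRRpos k)
        have h2 : 0 ≤ (1 - |1 - τ| / α) * σ * Bz k :=
          mul_nonneg (mul_nonneg hc2pos.le hσ.le) (hBzpos k)
        have h3 := hDypos k
        exact mul_le_mul_of_nonneg_left
          (by linarith : Dz k
            ≤ ((2 - τ) - |1 - τ| * α) * σ * RR k + (1 - |1 - τ| / α) * σ * Bz k + Dy k + Dz k)
          hτσ.le
      refine ⟨hSRR, hSDy, hSDz, hSBz, ?_⟩
      -- Phi converges since Θ converges and the extra terms vanish
      have hRR0 : Tendsto RR atTop (nhds 0) := hSRR.tendsto_atTop_zero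
      have hDz0 : Tendsto Dz atTop (nhds 0) := hSDz.tendsto_atTop_zero
      have hr0full : Tendsto (fun j => ‖r j‖ ^ 2) atTop (nhds 0) := by
        apply (tendsto_add_atTop_iff_nat 1).mp
        simpa [hRRdef] using hRR0
      have hDzm1 : Tendsto (fun j => ⟪z j - z (j - 1), T (z j - z (j - 1))⟫) atTop (nhds 0) := by
        have h1 : Tendsto (fun j : ℕ => Dz (j - 1)) atTop (nhds 0) :=
          hDz0.comp (tendsto_sub_atTop_nat 1)
        apply h1.congr'
        filter_upwards [eventually_ge_atTop 1] with j hj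
        simp only [hDzdef]
        rw [show j - 1 + 1 = j from by omega]
      have hdiff : Tendsto (fun j => Θ j - Phi xh j) atTop (nhds 0) := by
        have : (fun j => Θ j - Phi xh j) = fun j => (τ * σ) * (|1 - τ| * α * σ * ‖r j‖ ^ 2
            + ⟪z j - z (j - 1), T (z j - z (j - 1))⟫) := by
          funext j; simp only [hΘdef]; ring
        rw [this]
        have h1 : Tendsto (fun j => |1 - τ| * α * σ * ‖r j‖ ^ 2
            + ⟪z j - z (j - 1), T (z j - z (j - 1))⟫) atTop (nhds 0) := by
          have h2 := (hr0full.const_mul (|1 - τ| * α * σ)).add hDzm1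
          simpa using h2
        have := h1.const_mul (τ * σ)
        simpa using this
      refine ⟨L, ?_⟩
      have := hΘL.sub hdiff
      simp only [sub_sub_cancel] at this
      simpa using this
    · -- case τ ≥ (1+√5)/2 with summability assumption
      have hxd : ∀ k, x (k + 1) - x k = (τ * σ) • r (k + 1) := by
        intro k; rw [hxup k]; abel
      have hnorm : ∀ k, ‖x (k + 1) - x k‖ ^ 2 = (τ * σ) ^ 2 * RR k := by
        intro k
        rw [hxd k, norm_smul, mul_pow, Real.norm_eq_abs, sq_abs]
      have hsum' : Summable (fun k => (τ * σ) ^ 2 * RR k) := by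
        apply hsum.congr
        intro k
        exact hnorm k
      have hSRR : Summable RR := by
        apply extract (fun k => (τ * σ) ^ 2 * RR k) RR ((τ * σ) ^ 2) (by positivity) hsum' hRRpos
        intro k; exact le_refl _
      have hb : ∀ k, 2 * tc k ≤ 2 * RR k + Bz k / 2 := by
        intro k
        apply two_mul_le'
        · linarith [hRRpos k]
        · linarith [hBzpos k]
        have hcs : tc k ^ 2 ≤ RR k * Bz k := by
          have h1 := abs_real_inner_le_norm (r (k + 1)) (b (z (k + 1) - z k))
          have h2 : tc k ^ 2 ≤ (‖r (k + 1)‖ * ‖b (z (k + 1) - z k)‖) ^ 2 := by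
            simp only [htcdef]
            rw [← sq_abs]
            exact pow_le_pow_left₀ (abs_nonneg _) h1 2
          calc tc k ^ 2 ≤ (‖r (k + 1)‖ * ‖b (z (k + 1) - z k)‖) ^ 2 := h2
          _ = RR k * Bz k := by simp only [hRRdef, hBzdef]; ring
        calc tc k ^ 2 ≤ RR k * Bz k := hcs
        _ = (2 * RR k) * (Bz k / 2) := by ring
      have hrec : ∀ k, 0 ≤ k → Phi xh (k + 1) + (τ * σ) * (σ / 2 * Bz k + Dy k + Dz k)
          ≤ Phi xh k + (τ * σ) ^ 2 * RR k := by
        intro k _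
        have hMIk := hMI' xh hxA hxB k
        have hb' := mul_le_mul_of_nonneg_left (hb k)
          (by positivity : (0:ℝ) ≤ τ * σ * σ)
        exact comb2 τ σ (Phi xh (k + 1)) (Phi xh k) (RR k) (tc k) (Bz k) (Dy k) (Dz k) hMIk hb'
      obtain ⟨hWsum, L, hPL⟩ := quasi_fejer (Phi xh)
        (fun k => (τ * σ) * (σ / 2 * Bz k + Dy k + Dz k))
        (fun k => (τ * σ) ^ 2 * RR k) 0 (hPhipos xh)
        (by
          intro k
          have h1 : 0 ≤ σ / 2 * Bz k := mul_nonneg (by positivity) (hBzpos k)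
          have h2 := hDypos k
          have h3 := hDzpos k
          exact mul_nonneg hτσ.le (by linarith))
        (fun k => mul_nonneg (sq_nonneg _) (hRRpos k)) hsum' hrec
      have hSBz : Summable Bz := by
        apply extract _ Bz ((τ * σ) * (σ / 2)) (by positivity) hWsum hBzpos
        intro k
        have h2 := hDypos k
        have h3 := hDzpos k
        have := mul_le_mul_of_nonneg_left
          (by linarith : σ / 2 * Bz k ≤ σ / 2 * Bz k + Dy k + Dz k) hτσ.le
        calc (τ * σ) * (σ / 2) * Bz k = (τ * σ) * (σ / 2 * Bz k) := by ring
        _ ≤ _ := this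
      have hSDy : Summable Dy := by
        apply extract _ Dy (τ * σ) hτσ hWsum hDypos
        intro k
        have h1 : 0 ≤ σ / 2 * Bz k := mul_nonneg (by positivity) (hBzpos k)
        have h3 := hDzpos k
        exact mul_le_mul_of_nonneg_left
          (by linarith : Dy k ≤ σ / 2 * Bz k + Dy k + Dz k) hτσ.le
      have hSDz : Summable Dz := by
        apply extract _ Dz (τ * σ) hτσ hWsum hDzpos
        intro k
        have h1 : 0 ≤ σ / 2 * Bz k := mul_nonneg (by positivity) (hBzpos k)
        have h3 := hDypos k
        exact mul_le_mul_of_nonneg_left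
          (by linarith : Dz k ≤ σ / 2 * Bz k + Dy k + Dz k) hτσ.le
      exact ⟨hSRR, hSDy, hSDz, hSBz, L, hPL⟩
  obtain ⟨hSRR, hSDy, hSDz, hSBz, LB, hPhiB⟩ := master xb hAxb hBxb
  -- limits
  have hRR0 : Tendsto RR atTop (nhds 0) := hSRR.tendsto_atTop_zero
  have hDy0 : Tendsto Dy atTop (nhds 0) := hSDy.tendsto_atTop_zero
  have hDz0 : Tendsto Dz atTop (nhds 0) := hSDz.tendsto_atTop_zero
  have hBz0 : Tendsto Bz atTop (nhds 0) := hSBz.tendsto_atTop_zero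
  have hr0 : Tendsto r atTop (nhds 0) := by
    apply sqnorm_summable_tendsto
    apply (tendsto_add_atTop_iff_nat 1).mp
    simpa [hRRdef] using hRR0
  have hr1n : Tendsto (fun k => ‖r (k + 1)‖) atTop (nhds 0) := by
    have h1 : Tendsto (fun k => r (k + 1)) atTop (nhds (0:X)) :=
      hr0.comp (tendsto_add_atTop_nat 1)
    simpa using h1.norm
  have hbdz0 : Tendsto (fun k => b (z (k + 1) - z k)) atTop (nhds 0) := by
    apply sqnorm_summable_tendsto
    simpa [hBzdef] using hBz0
  have hrt0 : Tendsto (fun k => ‖r (k + 1) - b (z (k + 1) - z k)‖) atTop (nhds 0) := by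
    have h1 : Tendsto (fun k => r (k + 1)) atTop (nhds (0:X)) :=
      hr0.comp (tendsto_add_atTop_nat 1)
    have h2 := h1.sub hbdz0
    simpa using h2.norm
  -- bounds
  obtain ⟨MP, hMP⟩ : ∃ MP : ℝ, ∀ k, Phi xb k ≤ MP := by
    obtain ⟨MP, hMP⟩ := hPhiB.bddAbove_range
    exact ⟨MP, fun k => hMP ⟨k, rfl⟩⟩
  have hMP0 : 0 ≤ MP := le_trans (hPhipos xb 0) (hMP 0)
  have hPhiparts : ∀ k, ‖x k - xb‖ ^ 2 ≤ MP
      ∧ (τ * σ) * ⟪y k - yb, S (y k - yb)⟫ ≤ MP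
      ∧ (τ * σ) * ⟪z k - zb, T (z k - zb)⟫ ≤ MP
      ∧ (τ * σ) * (σ * ‖b (z k - zb)‖ ^ 2) ≤ MP := by
    intro k
    have h := hMP k
    simp only [hPhidef] at h
    have h1 := hSpsd (y k - yb)
    have h2 := hTpsd (z k - zb)
    have h3 : (0:ℝ) ≤ σ * ‖b (z k - zb)‖ ^ 2 := mul_nonneg hσ.le (sq_nonneg _)
    have h4 : (0:ℝ) ≤ ‖x k - xb‖ ^ 2 := sq_nonneg _
    have e1 : 0 ≤ (τ * σ) * ⟪y k - yb, S (y k - yb)⟫ := mul_nonneg hτσ.le h1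
    have e2 : 0 ≤ (τ * σ) * ⟪z k - zb, T (z k - zb)⟫ := mul_nonneg hτσ.le h2
    have e3 : 0 ≤ (τ * σ) * (σ * ‖b (z k - zb)‖ ^ 2) := mul_nonneg hτσ.le h3
    constructor
    · nlinarith
    constructor
    · nlinarith
    constructor
    · nlinarith
    · nlinarith
  set Mx : ℝ := Real.sqrt MP + ‖xb‖ with hMxdef
  have hxbd : ∀ k, ‖x k‖ ≤ Mx := by
    intro k
    have h1 : ‖x k - xb‖ ≤ Real.sqrt MP := by
      rw [show ‖x k - xb‖ = Real.sqrt (‖x k - xb‖ ^ 2) from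
        (Real.sqrt_sq (norm_nonneg _)).symm]
      exact Real.sqrt_le_sqrt (hPhiparts k).1
    calc ‖x k‖ = ‖(x k - xb) + xb‖ := by congr 1; abel
    _ ≤ ‖x k - xb‖ + ‖xb‖ := norm_add_le _ _
    _ ≤ Real.sqrt MP + ‖xb‖ := by linarith
  set MS : ℝ := MP / (τ * σ) with hMSdef
  have hMS0 : 0 ≤ MS := div_nonneg hMP0 hτσ.le
  have hSybd : ∀ k, ⟪y k - yb, S (y k - yb)⟫ ≤ MS := by
    intro k
    rw [hMSdef, le_div_iff₀ hτσ]
    calc ⟪y k - yb, S (y k - yb)⟫ * (τ * σ) = (τ * σ) * ⟪y k - yb, S (y k - yb)⟫ := by ring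
    _ ≤ MP := (hPhiparts k).2.1
  have hTzbd : ∀ k, ⟪z k - zb, T (z k - zb)⟫ ≤ MS := by
    intro k
    rw [hMSdef, le_div_iff₀ hτσ]
    calc ⟪z k - zb, T (z k - zb)⟫ * (τ * σ) = (τ * σ) * ⟪z k - zb, T (z k - zb)⟫ := by ring
    _ ≤ MP := (hPhiparts k).2.2.1
  set Mbz : ℝ := Real.sqrt (MP / (τ * σ * σ)) with hMbzdef
  have hbzbd : ∀ k, ‖b (z k - zb)‖ ≤ Mbz := by
    intro k
    rw [hMbzdef, show ‖b (z k - zb)‖ = Real.sqrt (‖b (z k - zb)‖ ^ 2) from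
      (Real.sqrt_sq (norm_nonneg _)).symm]
    apply Real.sqrt_le_sqrt
    rw [le_div_iff₀ (by positivity : (0:ℝ) < τ * σ * σ)]
    calc ‖b (z k - zb)‖ ^ 2 * (τ * σ * σ) = (τ * σ) * (σ * ‖b (z k - zb)‖ ^ 2) := by ring
    _ ≤ MP := (hPhiparts k).2.2.2
  obtain ⟨Mr, hMr0, hMr⟩ : ∃ Mr : ℝ, 0 ≤ Mr ∧ ∀ k, ‖r k‖ ≤ Mr := by
    have h1 : Tendsto (fun k => ‖r k‖) atTop (nhds 0) := by simpa using hr0.norm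
    obtain ⟨M0, hM0⟩ := h1.bddAbove_range
    exact ⟨M0, le_trans (norm_nonneg (r 0)) (hM0 ⟨0, rfl⟩), fun k => hM0 ⟨k, rfl⟩⟩
  set May : ℝ := Mr + Mbz with hMaydef
  have haybd : ∀ k, ‖a (y k - yb)‖ ≤ May := by
    intro k
    have h1 : a (y k - yb) = r k - b (z k - zb) := by rw [hrerr k]; abel
    rw [h1]
    calc ‖r k - b (z k - zb)‖ ≤ ‖r k‖ + ‖b (z k - zb)‖ := norm_sub_le _ _
    _ ≤ Mr + Mbz := add_le_add (hMr k) (hbzbd k)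
  -- primal objective values
  set pv : ℕ → ℝ := fun k => (f (y k)).toReal + (g (z k)).toReal with hpvdef
  have hfyb : f yb ≠ ⊤ := subdiff_ne_top hf.1 hAxb
  have hgzb : g zb ≠ ⊤ := subdiff_ne_top hg.1 hBxb
  set popt : ℝ := (f yb).toReal + (g zb).toReal with hpoptdef
  have hxrinner : ∀ k, ⟪xb, r k⟫ = ⟪A xb, y k - yb⟫ + ⟪B xb, z k - zb⟫ := by
    intro k
    rw [hrerr k, inner_add_right, hAtrans, hBtrans]
  have hlow : ∀ k, popt - ⟪xb, r k⟫ ≤ pv k := by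
    intro k
    have h1 := subdiff_real hAxb hfyb (hf.2.1 _) (hfin k).1 (hf.2.1 _)
    have h2 := subdiff_real hBxb hgzb (hg.2.1 _) (hfin k).2 (hg.2.1 _)
    rw [inner_neg_left] at h1 h2
    rw [hxrinner k]
    simp only [hpvdef, hpoptdef]
    linarith
  have hveq : ∀ j : ℕ, b (z (j + 1)) + (a (y (j + 1)) - c) = r (j + 1) := by
    intro j; simp only [hrdef]; abel
  have hueq : ∀ j : ℕ, a (y (j + 1)) + (b (z j) - c) = r (j + 1) - b (z (j + 1) - z j) := by
    intro j; simp only [hrdef, map_sub]; abel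
  have huexp : ∀ k (w : Y),
      ⟪-(A (x k) + σ • A (a (y (k + 1)) + (b (z k) - c)) + S (y (k + 1) - y k)), w⟫
      = -(⟪x k, a w⟫ + σ * ⟪r (k + 1) - b (z (k + 1) - z k), a w⟫
          + ⟪S (y (k + 1) - y k), w⟫) := by
    intro k w
    rw [hueq k]
    simp only [inner_neg_left, inner_add_left, real_inner_smul_left]
    rw [hAtrans (x k) w, hAtrans _ w]
    all_goals ring
  have hvexp : ∀ k (w : Z),
      ⟪-(B (x k) + σ • B (b (z (k + 1)) + (a (y (k + 1)) - c)) + T (z (k + 1) - z k)), w⟫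
      = -(⟪x k, b w⟫ + σ * ⟪r (k + 1), b w⟫ + ⟪T (z (k + 1) - z k), w⟫) := by
    intro k w
    rw [hveq k]
    simp only [inner_neg_left, inner_add_left, real_inner_smul_left]
    rw [hBtrans (x k) w, hBtrans _ w]
    all_goals ring
  set E : ℕ → ℝ := fun k => -(⟪x k, r (k + 1)⟫)
    - σ * ⟪r (k + 1) - b (z (k + 1) - z k), a (y (k + 1) - yb)⟫
    - σ * ⟪r (k + 1), b (z (k + 1) - zb)⟫
    - ⟪S (y (k + 1) - y k), y (k + 1) - yb⟫
    - ⟪T (z (k + 1) - z k), z (k + 1) - zb⟫ with hEdef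
  have hup : ∀ k, pv (k + 1) ≤ popt + E k := by
    intro k
    have h1 := subdiff_real (hgrad k).1 (hfin (k + 1)).1 (hf.2.1 _) hfyb (hf.2.1 _)
    have h2 := subdiff_real (hgrad k).2 (hfin (k + 1)).2 (hg.2.1 _) hgzb (hg.2.1 _)
    rw [huexp k (yb - y (k + 1))] at h1
    rw [hvexp k (zb - z (k + 1))] at h2
    have e1 : a (yb - y (k + 1)) = -(a (y (k + 1) - yb)) := by
      rw [← map_neg]; congr 1; abel
    have e2 : b (zb - z (k + 1)) = -(b (z (k + 1) - zb)) := by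
      rw [← map_neg]; congr 1; abel
    rw [e1] at h1
    rw [e2] at h2
    simp only [inner_neg_right] at h1 h2
    have e3 : ⟪S (y (k + 1) - y k), yb - y (k + 1)⟫
        = -⟪S (y (k + 1) - y k), y (k + 1) - yb⟫ := by
      rw [← inner_neg_right]; congr 1; abel
    have e4 : ⟪T (z (k + 1) - z k), zb - z (k + 1)⟫
        = -⟪T (z (k + 1) - z k), z (k + 1) - zb⟫ := by
      rw [← inner_neg_right]; congr 1; abel
    rw [e3] at h1
    rw [e4] at h2
    have e5 : ⟪x k, r (k + 1)⟫ = ⟪x k, a (y (k + 1) - yb)⟫ + ⟪x k, b (z (k + 1) - zb)⟫ := by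
      rw [hrerr (k + 1), inner_add_right]
    simp only [hpvdef, hpoptdef, hEdef]
    linarith
  -- E tends to zero
  have hE0 : Tendsto E atTop (nhds 0) := by
    have T1 : Tendsto (fun k => ⟪x k, r (k + 1)⟫) atTop (nhds 0) := by
      apply sq0 _ (fun k => ‖r (k + 1)‖) Mx _ hr1n
      intro k
      calc |⟪x k, r (k + 1)⟫| ≤ ‖x k‖ * ‖r (k + 1)‖ := abs_real_inner_le_norm _ _
      _ ≤ Mx * ‖r (k + 1)‖ := by
          apply mul_le_mul_of_nonneg_right (hxbd k) (norm_nonneg _)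
    have T2 : Tendsto (fun k => σ * ⟪r (k + 1) - b (z (k + 1) - z k), a (y (k + 1) - yb)⟫)
        atTop (nhds 0) := by
      apply sq0 _ (fun k => ‖r (k + 1) - b (z (k + 1) - z k)‖) (σ * May) _ hrt0
      intro k
      rw [abs_mul, abs_of_pos hσ]
      calc σ * |⟪r (k + 1) - b (z (k + 1) - z k), a (y (k + 1) - yb)⟫|
          ≤ σ * (‖r (k + 1) - b (z (k + 1) - z k)‖ * ‖a (y (k + 1) - yb)‖) :=
            mul_le_mul_of_nonneg_left (abs_real_inner_le_norm _ _) hσ.le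
      _ ≤ σ * (‖r (k + 1) - b (z (k + 1) - z k)‖ * May) := by
          apply mul_le_mul_of_nonneg_left _ hσ.le
          exact mul_le_mul_of_nonneg_left (haybd (k + 1)) (norm_nonneg _)
      _ = σ * May * ‖r (k + 1) - b (z (k + 1) - z k)‖ := by ring
    have T3 : Tendsto (fun k => σ * ⟪r (k + 1), b (z (k + 1) - zb)⟫) atTop (nhds 0) := by
      apply sq0 _ (fun k => ‖r (k + 1)‖) (σ * Mbz) _ hr1n
      intro k
      rw [abs_mul, abs_of_pos hσ]
      calc σ * |⟪r (k + 1), b (z (k + 1) - zb)⟫|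
          ≤ σ * (‖r (k + 1)‖ * ‖b (z (k + 1) - zb)‖) :=
            mul_le_mul_of_nonneg_left (abs_real_inner_le_norm _ _) hσ.le
      _ ≤ σ * (‖r (k + 1)‖ * Mbz) := by
          apply mul_le_mul_of_nonneg_left _ hσ.le
          exact mul_le_mul_of_nonneg_left (hbzbd (k + 1)) (norm_nonneg _)
      _ = σ * Mbz * ‖r (k + 1)‖ := by ring
    have T4 : Tendsto (fun k => ⟪S (y (k + 1) - y k), y (k + 1) - yb⟫) atTop (nhds 0) := by
      apply sq0' _ Dy MS hMS0 _ hDy0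
      intro k
      have h1 : ⟪S (y (k + 1) - y k), y (k + 1) - yb⟫
          = ⟪y (k + 1) - y k, S (y (k + 1) - yb)⟫ := hSsym _ _
      rw [h1]
      calc ⟪y (k + 1) - y k, S (y (k + 1) - yb)⟫ ^ 2
          ≤ ⟪y (k + 1) - y k, S (y (k + 1) - y k)⟫ * ⟪y (k + 1) - yb, S (y (k + 1) - yb)⟫ :=
            psd_cs S hSsym hSpsd _ _
      _ ≤ Dy k * MS := by
          apply mul_le_mul (le_refl _) (hSybd (k + 1)) (hSpsd _) (hDypos k)
    have T5 : Tendsto (fun k => ⟪T (z (k + 1) - z k), z (k + 1) - zb⟫) atTop (nhds 0) := by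
      apply sq0' _ Dz MS hMS0 _ hDz0
      intro k
      have h1 : ⟪T (z (k + 1) - z k), z (k + 1) - zb⟫
          = ⟪z (k + 1) - z k, T (z (k + 1) - zb)⟫ := hTsym _ _
      rw [h1]
      calc ⟪z (k + 1) - z k, T (z (k + 1) - zb)⟫ ^ 2
          ≤ ⟪z (k + 1) - z k, T (z (k + 1) - z k)⟫ * ⟪z (k + 1) - zb, T (z (k + 1) - zb)⟫ :=
            psd_cs T hTsym hTpsd _ _
      _ ≤ Dz k * MS := by
          apply mul_le_mul (le_refl _) (hTzbd (k + 1)) (hTpsd _) (hDzpos k)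
    have := ((((T1.neg).sub T2).sub T3).sub T4).sub T5
    simpa [hEdef] using this
  -- primal convergence
  have hxr0 : Tendsto (fun k => ⟪xb, r k⟫) atTop (nhds 0) := by
    apply sq0 _ (fun k => ‖r k‖) ‖xb‖ _ (by simpa using hr0.norm)
    intro k
    exact abs_real_inner_le_norm _ _
  have hpv : Tendsto pv atTop (nhds popt) := by
    apply (tendsto_add_atTop_iff_nat 1).mp
    apply tendsto_of_tendsto_of_tendsto_of_le_of_le
      (g := fun k => popt - ⟪xb, r (k + 1)⟫) (h := fun k => popt + E k)
    · have h1 : Tendsto (fun k => ⟪xb, r (k + 1)⟫) atTop (nhds 0) :=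
        hxr0.comp (tendsto_add_atTop_nat 1)
      have := (tendsto_const_nhds (x := popt) (f := atTop (α := ℕ))).sub h1
      simpa using this
    · have := (tendsto_const_nhds (x := popt) (f := atTop (α := ℕ))).add hE0
      simpa using this
    · intro k; exact hlow (k + 1)
    · intro k; exact hup k
  have hpopteq : f yb + g zb = ((popt : ℝ) : EReal) := by
    simp only [hpoptdef]
    rw [EReal.coe_add, EReal.coe_toReal hfyb (hf.2.1 _), EReal.coe_toReal hgzb (hg.2.1 _)]
  -- weak duality
  have hweak : ∀ w : X, dualFn f g A B c w ≤ ((popt : ℝ) : EReal) := by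
    intro w
    have h1 : dualFn f g A B c w
        ≤ f yb + g zb + ((⟪w, a yb + b zb - c⟫ : ℝ) : EReal) := by
      refine le_trans (iInf_le _ yb) ?_
      exact iInf_le _ zb
    have h2 : a yb + b zb - c = 0 := by rw [hcons]; simp
    rw [h2] at h1
    simp only [inner_zero_right, EReal.coe_zero, add_zero] at h1
    rwa [hpopteq] at h1
  -- key limit inequality at cluster points of x
  have hT1 : Tendsto (fun k => ⟪x k, r (k + 1)⟫) atTop (nhds 0) := by
    apply sq0 _ (fun k => ‖r (k + 1)‖) Mx _ hr1n
    intro k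
    calc |⟪x k, r (k + 1)⟫| ≤ ‖x k‖ * ‖r (k + 1)‖ := abs_real_inner_le_norm _ _
    _ ≤ Mx * ‖r (k + 1)‖ := mul_le_mul_of_nonneg_right (hxbd k) (norm_nonneg _)
  have hclus : ∀ xi : X, (∃ φ : ℕ → ℕ, StrictMono φ ∧ Tendsto (x ∘ φ) atTop (nhds xi)) →
      ∀ (y' : Y) (z' : Z), f y' ≠ ⊤ → g z' ≠ ⊤ →
        popt ≤ (f y').toReal + (g z').toReal + ⟪xi, a y' + b z' - c⟫ := by
    rintro xi ⟨φ, hφm, hφt⟩ y' z' hy' hz'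
    set err : ℕ → ℝ := fun k => ⟪x k, r (k + 1)⟫
      - σ * ⟪r (k + 1) - b (z (k + 1) - z k), a (y' - y (k + 1))⟫
      - σ * ⟪r (k + 1), b (z' - z (k + 1))⟫
      - ⟪S (y (k + 1) - y k), y' - y (k + 1)⟫
      - ⟪T (z (k + 1) - z k), z' - z (k + 1)⟫ with herrdef
    have hk : ∀ k, pv (k + 1) + err k
        ≤ (f y').toReal + (g z').toReal + ⟪x k, a y' + b z' - c⟫ := by
      intro k
      have h1 := subdiff_real (hgrad k).1 (hfin (k + 1)).1 (hf.2.1 _) hy' (hf.2.1 _)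
      have h2 := subdiff_real (hgrad k).2 (hfin (k + 1)).2 (hg.2.1 _) hz' (hg.2.1 _)
      rw [huexp k (y' - y (k + 1))] at h1
      rw [hvexp k (z' - z (k + 1))] at h2
      have e5 : ⟪x k, a (y' - y (k + 1))⟫ + ⟪x k, b (z' - z (k + 1))⟫
          = ⟪x k, a y' + b z' - c⟫ - ⟪x k, r (k + 1)⟫ := by
        rw [← inner_add_right, ← inner_sub_right]
        congr 1
        simp only [hrdef, map_sub]
        abel
      simp only [hpvdef, herrdef]
      linarith
    have herr0 : Tendsto err atTop (nhds 0) := by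
      have E2 : Tendsto (fun k => σ * ⟪r (k + 1) - b (z (k + 1) - z k), a (y' - y (k + 1))⟫)
          atTop (nhds 0) := by
        apply sq0 _ (fun k => ‖r (k + 1) - b (z (k + 1) - z k)‖)
          (σ * (‖a (y' - yb)‖ + May)) _ hrt0
        intro k
        have hb1 : ‖a (y' - y (k + 1))‖ ≤ ‖a (y' - yb)‖ + May := by
          have e : a (y' - y (k + 1)) = a (y' - yb) - a (y (k + 1) - yb) := by
            rw [← map_sub]; congr 1; abel
          rw [e]
          calc ‖a (y' - yb) - a (y (k + 1) - yb)‖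
              ≤ ‖a (y' - yb)‖ + ‖a (y (k + 1) - yb)‖ := norm_sub_le _ _
          _ ≤ ‖a (y' - yb)‖ + May := by linarith [haybd (k + 1)]
        rw [abs_mul, abs_of_pos hσ]
        calc σ * |⟪r (k + 1) - b (z (k + 1) - z k), a (y' - y (k + 1))⟫|
            ≤ σ * (‖r (k + 1) - b (z (k + 1) - z k)‖ * ‖a (y' - y (k + 1))‖) :=
              mul_le_mul_of_nonneg_left (abs_real_inner_le_norm _ _) hσ.le
        _ ≤ σ * (‖r (k + 1) - b (z (k + 1) - z k)‖ * (‖a (y' - yb)‖ + May)) := by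
            apply mul_le_mul_of_nonneg_left _ hσ.le
            exact mul_le_mul_of_nonneg_left hb1 (norm_nonneg _)
        _ = σ * (‖a (y' - yb)‖ + May) * ‖r (k + 1) - b (z (k + 1) - z k)‖ := by ring
      have E3 : Tendsto (fun k => σ * ⟪r (k + 1), b (z' - z (k + 1))⟫) atTop (nhds 0) := by
        apply sq0 _ (fun k => ‖r (k + 1)‖) (σ * (‖b (z' - zb)‖ + Mbz)) _ hr1n
        intro k
        have hb1 : ‖b (z' - z (k + 1))‖ ≤ ‖b (z' - zb)‖ + Mbz := by
          have e : b (z' - z (k + 1)) = b (z' - zb) - b (z (k + 1) - zb) := by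
            rw [← map_sub]; congr 1; abel
          rw [e]
          calc ‖b (z' - zb) - b (z (k + 1) - zb)‖
              ≤ ‖b (z' - zb)‖ + ‖b (z (k + 1) - zb)‖ := norm_sub_le _ _
          _ ≤ ‖b (z' - zb)‖ + Mbz := by linarith [hbzbd (k + 1)]
        rw [abs_mul, abs_of_pos hσ]
        calc σ * |⟪r (k + 1), b (z' - z (k + 1))⟫|
            ≤ σ * (‖r (k + 1)‖ * ‖b (z' - z (k + 1))‖) :=
              mul_le_mul_of_nonneg_left (abs_real_inner_le_norm _ _) hσ.le
        _ ≤ σ * (‖r (k + 1)‖ * (‖b (z' - zb)‖ + Mbz)) := by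
            apply mul_le_mul_of_nonneg_left _ hσ.le
            exact mul_le_mul_of_nonneg_left hb1 (norm_nonneg _)
        _ = σ * (‖b (z' - zb)‖ + Mbz) * ‖r (k + 1)‖ := by ring
      have E4 : Tendsto (fun k => ⟪S (y (k + 1) - y k), y' - y (k + 1)⟫) atTop (nhds 0) := by
        apply sq0' _ Dy (2 * ⟪y' - yb, S (y' - yb)⟫ + 2 * MS)
          (by linarith [hSpsd (y' - yb), hMS0]) _ hDy0
        intro k
        have h1 : ⟪S (y (k + 1) - y k), y' - y (k + 1)⟫
            = ⟪y (k + 1) - y k, S (y' - y (k + 1))⟫ := hSsym _ _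
        rw [h1]
        have hbd : ⟪y' - y (k + 1), S (y' - y (k + 1))⟫
            ≤ 2 * ⟪y' - yb, S (y' - yb)⟫ + 2 * MS := by
          have e : y' - y (k + 1) = (y' - yb) - (y (k + 1) - yb) := by abel
          rw [e]
          calc ⟪(y' - yb) - (y (k + 1) - yb), S ((y' - yb) - (y (k + 1) - yb))⟫
              ≤ 2 * ⟪y' - yb, S (y' - yb)⟫ + 2 * ⟪y (k + 1) - yb, S (y (k + 1) - yb)⟫ :=
                psd_sub S hSsym hSpsd _ _
          _ ≤ 2 * ⟪y' - yb, S (y' - yb)⟫ + 2 * MS := by linarith [hSybd (k + 1)]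
        calc ⟪y (k + 1) - y k, S (y' - y (k + 1))⟫ ^ 2
            ≤ ⟪y (k + 1) - y k, S (y (k + 1) - y k)⟫
              * ⟪y' - y (k + 1), S (y' - y (k + 1))⟫ := psd_cs S hSsym hSpsd _ _
        _ ≤ Dy k * (2 * ⟪y' - yb, S (y' - yb)⟫ + 2 * MS) :=
            mul_le_mul (le_refl _) hbd (hSpsd _) (hDypos k)
      have E5 : Tendsto (fun k => ⟪T (z (k + 1) - z k), z' - z (k + 1)⟫) atTop (nhds 0) := by
        apply sq0' _ Dz (2 * ⟪z' - zb, T (z' - zb)⟫ + 2 * MS)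
          (by linarith [hTpsd (z' - zb), hMS0]) _ hDz0
        intro k
        have h1 : ⟪T (z (k + 1) - z k), z' - z (k + 1)⟫
            = ⟪z (k + 1) - z k, T (z' - z (k + 1))⟫ := hTsym _ _
        rw [h1]
        have hbd : ⟪z' - z (k + 1), T (z' - z (k + 1))⟫
            ≤ 2 * ⟪z' - zb, T (z' - zb)⟫ + 2 * MS := by
          have e : z' - z (k + 1) = (z' - zb) - (z (k + 1) - zb) := by abel
          rw [e]
          calc ⟪(z' - zb) - (z (k + 1) - zb), T ((z' - zb) - (z (k + 1) - zb))⟫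
              ≤ 2 * ⟪z' - zb, T (z' - zb)⟫ + 2 * ⟪z (k + 1) - zb, T (z (k + 1) - zb)⟫ :=
                psd_sub T hTsym hTpsd _ _
          _ ≤ 2 * ⟪z' - zb, T (z' - zb)⟫ + 2 * MS := by linarith [hTzbd (k + 1)]
        calc ⟪z (k + 1) - z k, T (z' - z (k + 1))⟫ ^ 2
            ≤ ⟪z (k + 1) - z k, T (z (k + 1) - z k)⟫
              * ⟪z' - z (k + 1), T (z' - z (k + 1))⟫ := psd_cs T hTsym hTpsd _ _
        _ ≤ Dz k * (2 * ⟪z' - zb, T (z' - zb)⟫ + 2 * MS) :=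
            mul_le_mul (le_refl _) hbd (hTpsd _) (hDzpos k)
      have := (((hT1.sub E2).sub E3).sub E4).sub E5
      simpa [herrdef] using this
    -- pass to the limit along the subsequence
    have hφ1 : Tendsto (fun j => φ j + 1) atTop atTop :=
      (tendsto_add_atTop_nat 1).comp hφm.tendsto_atTop
    have hlhs : Tendsto (fun j => pv (φ j + 1) + err (φ j)) atTop (nhds popt) := by
      have h1 : Tendsto (fun j => pv (φ j + 1)) atTop (nhds popt) := hpv.comp hφ1
      have h2 : Tendsto (fun j => err (φ j)) atTop (nhds 0) := herr0.comp hφm.tendsto_atTop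
      simpa using h1.add h2
    have hrhs : Tendsto (fun j => (f y').toReal + (g z').toReal + ⟪x (φ j), a y' + b z' - c⟫)
        atTop (nhds ((f y').toReal + (g z').toReal + ⟪xi, a y' + b z' - c⟫)) := by
      have h1 : Tendsto (fun j => ⟪(x ∘ φ) j, a y' + b z' - c⟫) atTop
          (nhds ⟪xi, a y' + b z' - c⟫) := hφt.inner tendsto_const_nhds
      exact (tendsto_const_nhds (x := (f y').toReal + (g z').toReal)).add h1
    exact le_of_tendsto_of_tendsto' hlhs hrhs (fun j => hk (φ j))
  -- strong duality at cluster points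
  have hdual : ∀ xi : X, (∃ φ : ℕ → ℕ, StrictMono φ ∧ Tendsto (x ∘ φ) atTop (nhds xi)) →
      ((popt : ℝ) : EReal) ≤ dualFn f g A B c xi := by
    intro xi hxi
    apply le_iInf
    intro y'
    apply le_iInf
    intro z'
    rcases eq_or_ne (f y') ⊤ with hy | hy
    · rw [hy, EReal.top_add_of_ne_bot (hg.2.1 z'), EReal.top_add_of_ne_bot (EReal.coe_ne_bot _)]
      exact le_top
    rcases eq_or_ne (g z') ⊤ with hz | hz
    · rw [hz, EReal.add_top_of_ne_bot (hf.2.1 y'), EReal.top_add_of_ne_bot (EReal.coe_ne_bot _)]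
      exact le_top
    rw [← EReal.coe_toReal hy (hf.2.1 _), ← EReal.coe_toReal hz (hg.2.1 _),
      ← EReal.coe_add, ← EReal.coe_add, EReal.coe_le_coe_iff]
    exact hclus xi hxi y' z' hy hz
  -- KKT memberships at cluster points
  have hmem : ∀ xi : X, (∃ φ : ℕ → ℕ, StrictMono φ ∧ Tendsto (x ∘ φ) atTop (nhds xi)) →
      (-(A xi) ∈ subdiff f yb ∧ -(B xi) ∈ subdiff g zb) := by
    intro xi hxi
    constructor
    · intro w
      rcases eq_or_ne (f w) ⊤ with hw | hw
      · rw [hw]; exact le_top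
      · have h1 := hclus xi hxi w zb hw hgzb
        have hv2 : a w + b zb - c = a (w - yb) := by
          rw [map_sub, ← hcons]; abel
        rw [hv2] at h1
        have h3 : ⟪xi, a (w - yb)⟫ = ⟪A xi, w - yb⟫ := (hAtrans xi (w - yb)).symm
        rw [h3] at h1
        simp only [hpoptdef] at h1
        have h2 : (f yb).toReal + ⟪-(A xi), w - yb⟫ ≤ (f w).toReal := by
          rw [inner_neg_left]; linarith
        rw [← EReal.coe_toReal hfyb (hf.2.1 _), ← EReal.coe_toReal hw (hf.2.1 _),
          ← EReal.coe_add]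
        exact_mod_cast h2
    · intro w
      rcases eq_or_ne (g w) ⊤ with hw | hw
      · rw [hw]; exact le_top
      · have h1 := hclus xi hxi yb w hfyb hw
        have hv2 : a yb + b w - c = b (w - zb) := by
          rw [map_sub, ← hcons]; abel
        rw [hv2] at h1
        have h3 : ⟪xi, b (w - zb)⟫ = ⟪B xi, w - zb⟫ := (hBtrans xi (w - zb)).symm
        rw [h3] at h1
        simp only [hpoptdef] at h1
        have h2 : (g zb).toReal + ⟪-(B xi), w - zb⟫ ≤ (g w).toReal := by
          rw [inner_neg_left]; linarith
        rw [← EReal.coe_toReal hgzb (hg.2.1 _), ← EReal.coe_toReal hw (hg.2.1 _),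
          ← EReal.coe_add]
        exact_mod_cast h2
  -- existence of a cluster point
  have hmemball : ∀ k, x k ∈ Metric.closedBall (0 : X) Mx := by
    intro k
    rw [Metric.mem_closedBall, dist_zero_right]
    exact hxbd k
  obtain ⟨x1, _, φ1, hφ1m, hφ1t⟩ :=
    tendsto_subseq_of_bounded (Metric.isBounded_closedBall (x := (0:X)) (r := Mx)) hmemball
  have hx1clus : ∃ φ : ℕ → ℕ, StrictMono φ ∧ Tendsto (x ∘ φ) atTop (nhds x1) :=
    ⟨φ1, hφ1m, hφ1t⟩
  obtain ⟨hx1A, hx1B⟩ := hmem x1 hx1clus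
  have hxconv : Tendsto x atTop (nhds x1) := by
    by_contra hnot
    rw [Metric.tendsto_atTop] at hnot
    push_neg at hnot
    obtain ⟨ε, hε, hfreq⟩ := hnot
    have hfreq' : ∃ᶠ n in atTop, ε ≤ dist (x n) x1 := by
      rw [Filter.frequently_atTop]
      intro N
      obtain ⟨n, hn1, hn2⟩ := hfreq N
      exact ⟨n, hn1, hn2⟩
    obtain ⟨φ2, hφ2m, hφ2p⟩ := Filter.extraction_of_frequently_atTop hfreq'
    have hmem2 : ∀ j, (x ∘ φ2) j ∈ Metric.closedBall (0 : X) Mx := fun j => hmemball _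
    obtain ⟨x2, _, ψ, hψm, hψt⟩ :=
      tendsto_subseq_of_bounded (Metric.isBounded_closedBall (x := (0:X)) (r := Mx)) hmem2
    have hx2clus : ∃ φ : ℕ → ℕ, StrictMono φ ∧ Tendsto (x ∘ φ) atTop (nhds x2) :=
      ⟨φ2 ∘ ψ, hφ2m.comp hψm, hψt⟩
    have hdist : ε ≤ dist x2 x1 := by
      have hd : Tendsto (fun j => dist ((x ∘ φ2 ∘ ψ) j) x1) atTop (nhds (dist x2 x1)) :=
        hψt.dist tendsto_const_nhds
      exact ge_of_tendsto hd (Filter.Eventually.of_forall (fun j => hφ2p (ψ j)))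
    have hneq : x2 ≠ x1 := by
      intro h
      rw [h, dist_self] at hdist
      linarith
    obtain ⟨_, _, _, _, L1, hL1⟩ := master x1 hx1A hx1B
    obtain ⟨hx2A, hx2B⟩ := hmem x2 hx2clus
    obtain ⟨_, _, _, _, L2, hL2⟩ := master x2 hx2A hx2B
    set μ : ℝ := (‖x1‖ ^ 2 - ‖x2‖ ^ 2 - (L1 - L2)) / 2 with hμdef
    have hinner : Tendsto (fun k => ⟪x k, x1 - x2⟫) atTop (nhds μ) := by
      have hdiffc : Tendsto (fun k => Phi x1 k - Phi x2 k) atTop (nhds (L1 - L2)) :=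
        hL1.sub hL2
      have heq : ∀ k, Phi x1 k - Phi x2 k = ‖x1‖ ^ 2 - ‖x2‖ ^ 2 - 2 * ⟪x k, x1 - x2⟫ := by
        intro k
        simp only [hPhidef]
        have e1 : ‖x k - x1‖ ^ 2 = ‖x k‖ ^ 2 - 2 * ⟪x k, x1⟫ + ‖x1‖ ^ 2 :=
          norm_sub_sq_real _ _
        have e2 : ‖x k - x2‖ ^ 2 = ‖x k‖ ^ 2 - 2 * ⟪x k, x2⟫ + ‖x2‖ ^ 2 :=
          norm_sub_sq_real _ _
        rw [e1, e2, inner_sub_right]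
        ring
      have h2 : Tendsto (fun k => (‖x1‖ ^ 2 - ‖x2‖ ^ 2 - (Phi x1 k - Phi x2 k)) / 2) atTop
          (nhds μ) := by
        rw [hμdef]
        exact ((tendsto_const_nhds (x := ‖x1‖ ^ 2 - ‖x2‖ ^ 2)).sub hdiffc).div_const 2
      apply h2.congr
      intro k
      rw [heq k]
      ring
    have he1 : ⟪x1, x1 - x2⟫ = μ := by
      have ha : Tendsto (fun j => ⟪(x ∘ φ1) j, x1 - x2⟫) atTop (nhds ⟪x1, x1 - x2⟫) :=
        hφ1t.inner tendsto_const_nhds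
      have hb2 : Tendsto (fun j => ⟪(x ∘ φ1) j, x1 - x2⟫) atTop (nhds μ) :=
        hinner.comp hφ1m.tendsto_atTop
      exact tendsto_nhds_unique ha hb2
    have he2 : ⟪x2, x1 - x2⟫ = μ := by
      have ha : Tendsto (fun j => ⟪(x ∘ φ2 ∘ ψ) j, x1 - x2⟫) atTop (nhds ⟪x2, x1 - x2⟫) :=
        hψt.inner tendsto_const_nhds
      have hb2 : Tendsto (fun j => ⟪(x ∘ φ2 ∘ ψ) j, x1 - x2⟫) atTop (nhds μ) :=
        hinner.comp (hφ2m.comp hψm).tendsto_atTop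
      exact tendsto_nhds_unique ha hb2
    have hz : ⟪x1 - x2, x1 - x2⟫ = (0:ℝ) := by
      rw [inner_sub_left, he1, he2]
      ring
    have : x1 - x2 = 0 := by
      have h0 : ‖x1 - x2‖ ^ 2 = 0 := by rw [← real_inner_self_eq_norm_sq]; exact hz
      have h1 : ‖x1 - x2‖ = 0 := by nlinarith [norm_nonneg (x1 - x2)]
      exact norm_eq_zero.mp h1
    exact hneq ((sub_eq_zero.mp this).symm)
  refine ⟨⟨x1, hxconv, fun w => le_trans (hweak w) (le_trans ?_ (hdual x1 hx1clus))⟩, ?_⟩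
  · exact le_refl _
  · -- primal part of the conclusion
    have hfeq : (fun k : ℕ => f (y k) + g (z k)) = fun k => ((pv k : ℝ) : EReal) := by
      funext k
      simp only [hpvdef]
      rw [EReal.coe_add, EReal.coe_toReal (hfin k).1 (hf.2.1 _),
        EReal.coe_toReal (hfin k).2 (hg.2.1 _)]
    rw [hfeq, hpopteq]
    exact EReal.tendsto_coe.mpr hpv
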